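/- Let S₁ and S₂ be two consistent queryless schedules. The concatenation S₁.S₂ is consistent if and only if N^min_I(S₂) ⊆ N^max_O(S₁), E^min_I(S₂) ⊆ E^max_O(S₁), N^min_O(S₁) ⊆ N^max_I(S₂), and E^min_O(S₁) ⊆ E^max_I(S₂). -/

import Mathlib

attribute [local instance] Classical.propDecidable

/-! ## Data model: nodes, labels, edges, document trees -/

abbrev Node := ℕ
abbrev Label := ℕ
abbrev Edge := Node × Label × Node

/-- A candidate document tree: a finite node set, a finite edge set, a root. -/
structure Tree3 where
  N : Finset Node
  E : Finset Edge
  root : Node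

/-- The edge-step relation of a set of labelled edges. -/
def estep (E : Set Edge) (a b : Node) : Prop := ∃ l : Label, (a, l, b) ∈ E

/-- `T` is a document tree: the root is a node, edges connect nodes, every node has at
most one incoming edge, the root has none, and every node is reachable from the root
(edges are directed from parent to child). -/
def IsDT (T : Tree3) : Prop :=
  T.root ∈ T.N ∧
  (∀ e ∈ T.E, e.1 ∈ T.N ∧ e.2.2 ∈ T.N) ∧
  (∀ e ∈ T.E, ∀ e' ∈ T.E, e.2.2 = e'.2.2 → e = e') ∧
  (∀ e ∈ T.E, e.2.2 ≠ T.root) ∧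
  (∀ n ∈ T.N, Relation.ReflTransGen (estep (↑T.E)) T.root n)

/-! ## Update operations and queryless schedules -/

inductive Op where
  | add : Node → Label → Node → Op
  | del : Node → Label → Node → Op
deriving DecidableEq

/-- Apply an update operation to a tree; `none` when the operation is undefined. -/
noncomputable def applyOp (o : Op) (T : Tree3) : Option Tree3 :=
  match o with
  | Op.add m l n =>
      let T' : Tree3 := ⟨insert n T.N, insert (m, l, n) T.E, T.root⟩
      if (m, l, n) ∈ T.E ∨ ¬ IsDT T' then none else some T'
  | Op.del m l n =>
      let T' : Tree3 := ⟨T.N.erase n, T.E.erase (m, l, n), T.root⟩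
      if (m, l, n) ∉ T.E ∨ ¬ IsDT T' then none else some T'

/-- An action is an operation tagged with a transaction identifier. -/
abbrev QLAction := Op × ℕ

/-- A queryless (QL) schedule is a finite sequence of actions. -/
abbrev QLSchedule := List QLAction

/-- Apply a QL schedule to a tree, operation by operation. -/
noncomputable def applyQL : QLSchedule → Tree3 → Option Tree3
  | [], T => some T
  | a :: rest, T => (applyOp a.1 T).bind (applyQL rest)

/-- `S[T]` is defined (and `T` is a document tree). -/
def DefinedOn (S : QLSchedule) (T : Tree3) : Prop := IsDT T ∧ (applyQL S T).isSome

/-- A QL schedule is consistent iff it is defined on at least one document tree. -/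
def ConsistentQL (S : QLSchedule) : Prop := ∃ T, DefinedOn S T

def Op.src : Op → Node
  | Op.add m _ _ => m
  | Op.del m _ _ => m

def Op.tgt : Op → Node
  | Op.add _ _ n => n
  | Op.del _ _ n => n

def Op.edge : Op → Edge
  | Op.add m l n => (m, l, n)
  | Op.del m l n => (m, l, n)

/-- The list of operations of a QL schedule. -/
def ops (S : QLSchedule) : List Op := S.map Prod.fst

/-- The operation containing the first occurrence of the node `x` in `S`, if any. -/
def firstNodeOp (S : QLSchedule) (x : Node) : Option Op :=
  (ops S).find? (fun o => (o.src == x) || (o.tgt == x))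

/-- The operation containing the last occurrence of the node `x` in `S`, if any. -/
def lastNodeOp (S : QLSchedule) (x : Node) : Option Op :=
  (ops S).reverse.find? (fun o => (o.src == x) || (o.tgt == x))

/-- The operation containing the first occurrence of the edge `e` in `S`, if any. -/
def firstEdgeOp (S : QLSchedule) (e : Edge) : Option Op :=
  (ops S).find? (fun o => o.edge == e)

/-- The operation containing the last occurrence of the edge `e` in `S`, if any. -/
def lastEdgeOp (S : QLSchedule) (e : Edge) : Option Op :=
  (ops S).reverse.find? (fun o => o.edge == e)

/-- Some edge with target `x` occurs in `S`. -/
def occursTgt (S : QLSchedule) (x : Node) : Prop := ∃ o ∈ ops S, o.tgt = x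

/-- `N^min_I(S)`. -/
def NminI (S : QLSchedule) : Set Node :=
  {x | ∃ l n, firstNodeOp S x = some (Op.add x l n)} ∪
  {x | ∃ l n, firstNodeOp S x = some (Op.del x l n)} ∪
  {x | ∃ m l, firstNodeOp S x = some (Op.del m l x)}

/-- `N^max_I(S)`. -/
def NmaxI (S : QLSchedule) : Set Node :=
  {x | ¬ ∃ m l, firstNodeOp S x = some (Op.add m l x)}

/-- `E^min_I(S)`. -/
def EminI (S : QLSchedule) : Set Edge :=
  {e | firstEdgeOp S e = some (Op.del e.1 e.2.1 e.2.2)}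

/-- `E^max_I(S)`. -/
def EmaxI (S : QLSchedule) : Set Edge :=
  EminI S ∪ {e | ¬ occursTgt S e.1 ∧ ¬ occursTgt S e.2.2}

/-- `N^min_O(S)`. -/
def NminO (S : QLSchedule) : Set Node :=
  {x | ∃ l n, lastNodeOp S x = some (Op.del x l n)} ∪
  {x | ∃ l n, lastNodeOp S x = some (Op.add x l n)} ∪
  {x | ∃ m l, lastNodeOp S x = some (Op.add m l x)}

/-- `N^max_O(S)`. -/
def NmaxO (S : QLSchedule) : Set Node :=
  {x | ¬ ∃ m l, lastNodeOp S x = some (Op.del m l x)}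

/-- `E^min_O(S)`. -/
def EminO (S : QLSchedule) : Set Edge :=
  {e | lastEdgeOp S e = some (Op.add e.1 e.2.1 e.2.2)}

/-- `E^max_O(S)`. -/
def EmaxO (S : QLSchedule) : Set Edge :=
  EminO S ∪ {e | ¬ occursTgt S e.1 ∧ ¬ occursTgt S e.2.2}

/-- `ADD(S)`: edges whose last occurrence in `S` is an addition. -/
def ADDs (S : QLSchedule) : Set Edge :=
  {e | lastEdgeOp S e = some (Op.add e.1 e.2.1 e.2.2)}

/-- `DEL(S)`: edges whose last occurrence in `S` is a deletion. -/
def DELs (S : QLSchedule) : Set Edge :=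
  {e | lastEdgeOp S e = some (Op.del e.1 e.2.1 e.2.2)}

/-- `T` is a basic input tree of `S`. -/
def BasicInput (S : QLSchedule) (T : Tree3) : Prop :=
  IsDT T ∧ NminI S ⊆ ↑T.N ∧ ↑T.N ⊆ NmaxI S ∧ EminI S ⊆ ↑T.E ∧ ↑T.E ⊆ EmaxI S

/-- `T` is a basic output tree of `S`. -/
def BasicOutput (S : QLSchedule) (T : Tree3) : Prop :=
  IsDT T ∧ NminO S ⊆ ↑T.N ∧ ↑T.N ⊆ NmaxO S ∧ EminO S ⊆ ↑T.E ∧ ↑T.E ⊆ EmaxO S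

/-- The C-condition (nine clauses). -/
def CCond (S : QLSchedule) : Prop :=
  (∀ i j (n l₁ n₁ n₂ l₂ : ℕ), i < j →
      (ops S)[i]? = some (Op.add n l₁ n₁) → (ops S)[j]? = some (Op.add n₂ l₂ n) →
      ∃ k : ℕ, i < k ∧ k < j ∧ (ops S)[k]? = some (Op.del n l₁ n₁)) ∧
  (∀ i j (n₁ l₁ n n₂ l₂ : ℕ), i < j →
      (ops S)[i]? = some (Op.add n₁ l₁ n) → (ops S)[j]? = some (Op.add n₂ l₂ n) →
      ∃ k : ℕ, i < k ∧ k < j ∧ (ops S)[k]? = some (Op.del n₁ l₁ n)) ∧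
  (∀ i j (n l₁ n₁ n₂ l₂ : ℕ), i < j →
      (ops S)[i]? = some (Op.add n l₁ n₁) → (ops S)[j]? = some (Op.del n₂ l₂ n) →
      ∃ k : ℕ, i < k ∧ k < j ∧ (ops S)[k]? = some (Op.del n l₁ n₁)) ∧
  (∀ i j (n₁ l₁ n l₂ n₂ : ℕ), i < j →
      (ops S)[i]? = some (Op.add n₁ l₁ n) → (ops S)[j]? = some (Op.del n l₂ n₂) →
      ∃ k : ℕ, i < k ∧ k < j ∧ (ops S)[k]? = some (Op.add n l₂ n₂)) ∧
  (∀ i j (n₁ l₁ n n₂ l₂ : ℕ), i < j → (n₁, l₁) ≠ (n₂, l₂) →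
      (ops S)[i]? = some (Op.add n₁ l₁ n) → (ops S)[j]? = some (Op.del n₂ l₂ n) →
      ∃ k : ℕ, i < k ∧ k < j ∧ (ops S)[k]? = some (Op.del n₁ l₁ n)) ∧
  (∀ i j (n l₁ n₁ n₂ l₂ : ℕ), i < j →
      (ops S)[i]? = some (Op.del n l₁ n₁) → (ops S)[j]? = some (Op.add n₂ l₂ n) →
      ∃ k : ℕ, ∃ n₃ l₃ : ℕ, i < k ∧ k < j ∧ (ops S)[k]? = some (Op.del n₃ l₃ n)) ∧
  (∀ i j (n₁ l₁ n l₂ n₂ : ℕ), i < j →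
      (ops S)[i]? = some (Op.del n₁ l₁ n) → (ops S)[j]? = some (Op.add n l₂ n₂) →
      ∃ k : ℕ, ∃ n₃ l₃ : ℕ, i < k ∧ k < j ∧ (ops S)[k]? = some (Op.add n₃ l₃ n)) ∧
  (∀ i j (n₁ l₁ n l₂ n₂ : ℕ), i < j →
      (ops S)[i]? = some (Op.del n₁ l₁ n) → (ops S)[j]? = some (Op.del n l₂ n₂) →
      ∃ k : ℕ, ∃ n₃ l₃ : ℕ, i < k ∧ k < j ∧ (ops S)[k]? = some (Op.add n₃ l₃ n)) ∧
  (∀ i j (n₁ l₁ n n₂ l₂ : ℕ), i < j →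
      (ops S)[i]? = some (Op.del n₁ l₁ n) → (ops S)[j]? = some (Op.del n₂ l₂ n) →
      ∃ k : ℕ, i < k ∧ k < j ∧ (ops S)[k]? = some (Op.add n₂ l₂ n))

/-! ## Transactions, equivalence and serializability of QL schedules -/

/-- Two QL schedules are interleavings of the same set of transactions: for every
transaction identifier, the subsequences of actions with that identifier coincide. -/
def SameTrans (S S' : QLSchedule) : Prop :=
  ∀ t : ℕ, S.filter (fun a => a.2 == t) = S'.filter (fun a => a.2 == t)

/-- A schedule is serial iff the actions of each transaction occur consecutively. -/
def Serial (S : QLSchedule) : Prop :=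
  ∀ i j k : ℕ, i ≤ j → j ≤ k →
    ∀ a b c : QLAction, S[i]? = some a → S[j]? = some b → S[k]? = some c →
      a.2 = c.2 → b.2 = a.2

/-- Two QL schedules are equivalent: they are defined on the same non-empty set of
document trees and produce the same output tree on each of them. -/
def EquivQL (S S' : QLSchedule) : Prop :=
  (∃ T, DefinedOn S T) ∧ ∀ T, IsDT T → applyQL S T = applyQL S' T

/-- A QL schedule is serializable iff it is equivalent to a serial schedule over the
same set of transactions. -/
def SerializableQL (S : QLSchedule) : Prop :=
  ∃ S', Serial S' ∧ SameTrans S S' ∧ EquivQL S S'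

/-! ## Paths and forests -/

/-- `SPath G m lp n`: there is a directed path from `m` to `n` in the edge set `G`
whose label path is `lp`. -/
inductive SPath (G : Set Edge) : Node → List Label → Node → Prop where
  | nil (n : Node) : SPath G n [] n
  | cons {m n n' : Node} {l : Label} {lp : List Label} :
      (m, l, n) ∈ G → SPath G n lp n' → SPath G m (l :: lp) n'

/-- A set of edges is a forest: no two distinct edges share a target, and
there is no (non-trivial) directed cycle. -/
def IsForest (G : Set Edge) : Prop :=
  (∀ e ∈ G, ∀ e' ∈ G, e.2.2 = e'.2.2 → e = e') ∧
  ¬ ∃ (n : Node) (lp : List Label), lp ≠ [] ∧ SPath G n lp n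

/-! ## Path expressions -/

inductive Step where
  | star : Step
  | lab : Label → Step
deriving DecidableEq

/-- Path expressions: `ε`, `pe/f` and `pe//f` (a single step `f` is `ε/f`). -/
inductive PathExpr where
  | eps : PathExpr
  | child : PathExpr → Step → PathExpr
  | desc : PathExpr → Step → PathExpr
deriving DecidableEq

def Step.mtch : Step → Label → Prop
  | Step.star, _ => True
  | Step.lab l, l' => l = l'

def Step.mtchB : Step → Label → Bool
  | Step.star, _ => true
  | Step.lab l, l' => l == l'

/-- The set `L(pe)` of label paths represented by a path expression
(a label path is a list of labels). -/
def PathExpr.lang : PathExpr → Set (List Label)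
  | PathExpr.eps => {[]}
  | PathExpr.child pe f => {w | ∃ u l, u ∈ pe.lang ∧ f.mtch l ∧ w = u ++ [l]}
  | PathExpr.desc pe f => {w | ∃ u v l, u ∈ pe.lang ∧ f.mtch l ∧ w = u ++ v ++ [l]}

/-- `SOP` on a *reversed* label path. -/
def SOPr : PathExpr → List Label → Set PathExpr
  | pe, [] => {pe}
  | PathExpr.eps, _ :: _ => ∅
  | PathExpr.child pe f, l :: lp => if f.mtchB l then SOPr pe lp else ∅
  | PathExpr.desc pe f, l :: lp =>
      if f.mtchB l then SOPr pe lp ∪ SOPr (PathExpr.desc pe Step.star) lp else ∅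
termination_by pe lp => lp.length

/-- `SOP(pe)_lp`: the set of non-empty `lp`-prefixes of `pe`. -/
def SOP (pe : PathExpr) (lp : List Label) : Set PathExpr := SOPr pe lp.reverse

/-- `L(SOP(pe)_lp)`. -/
def LSOP (pe : PathExpr) (lp : List Label) : Set (List Label) :=
  ⋃ pe' ∈ SOP pe lp, pe'.lang

/-- `pe/lp`: append a label path to a path expression with `/` separators. -/
def PathExpr.appendLP : PathExpr → List Label → PathExpr
  | pe, [] => pe
  | pe, l :: lp => PathExpr.appendLP (PathExpr.child pe (Step.lab l)) lp

/-- The prefixes of a path expression (including `ε`). -/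
def PathExpr.prefixes : PathExpr → Set PathExpr
  | PathExpr.eps => {PathExpr.eps}
  | PathExpr.child pe f => insert (PathExpr.child pe f) pe.prefixes
  | PathExpr.desc pe f => insert (PathExpr.desc pe f) pe.prefixes

/-! ## Schedules with queries -/

inductive GOp where
  | query : Node → PathExpr → GOp
  | add : Node → Label → Node → GOp
  | del : Node → Label → Node → GOp

abbrev GAction := GOp × ℕ

/-- A (general) schedule is a finite sequence of query/add/del actions. -/
abbrev Schedule := List GAction

def GOp.toOp? : GOp → Option Op
  | GOp.query _ _ => none
  | GOp.add m l n => some (Op.add m l n)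
  | GOp.del m l n => some (Op.del m l n)

/-- The QL schedule of a schedule: remove all query actions. -/
def qlOf (S : Schedule) : QLSchedule :=
  S.filterMap (fun a => (a.1.toOp?).map (fun o => (o, a.2)))

/-- The answer of `query(n,pe)` on a tree `T`. -/
def queryAnswer (n : Node) (pe : PathExpr) (T : Tree3) : Set Node :=
  {n' | n' ∈ T.N ∧ ∃ lp, SPath (↑T.E) n lp n' ∧ lp ∈ pe.lang}

/-- A schedule is consistent iff its QL schedule is. -/
def ConsistentSched (S : Schedule) : Prop := ConsistentQL (qlOf S)

/-- Run a schedule on a tree: the final tree together with, for each query (in order),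
its transaction identifier and its answer; `none` if some update is undefined. -/
noncomputable def runQ : Schedule → Tree3 → Option (Tree3 × List (ℕ × Set Node))
  | [], T => some (T, [])
  | (GOp.query n pe, t) :: rest, T =>
      (runQ rest T).map (fun p => (p.1, (t, queryAnswer n pe T) :: p.2))
  | (GOp.add m l n, _) :: rest, T =>
      (applyOp (Op.add m l n) T).bind (runQ rest)
  | (GOp.del m l n, _) :: rest, T =>
      (applyOp (Op.del m l n) T).bind (runQ rest)

/-- Two schedules are equivalent: defined on the same non-empty set of document trees,
and on each such tree they produce the same output tree and, per transaction, the same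
sequence of query answers. -/
def EquivSched (S₁ S₂ : Schedule) : Prop :=
  (∃ T, IsDT T ∧ (runQ S₁ T).isSome) ∧
  ∀ T, IsDT T →
    ((runQ S₁ T).isSome ↔ (runQ S₂ T).isSome) ∧
    ∀ p₁ p₂, runQ S₁ T = some p₁ → runQ S₂ T = some p₂ →
      p₁.1 = p₂.1 ∧
      ∀ t : ℕ, (p₁.2.filter (fun x => x.1 == t)).map Prod.snd
             = (p₂.2.filter (fun x => x.1 == t)).map Prod.snd

/-- Two schedules are interleavings of the same set of transactions. -/
def SameTransG (S S' : Schedule) : Prop :=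
  ∀ t : ℕ, S.filter (fun a => a.2 == t) = S'.filter (fun a => a.2 == t)

/-- A schedule is serial iff the actions of each transaction occur consecutively. -/
def SerialG (S : Schedule) : Prop :=
  ∀ i j k : ℕ, i ≤ j → j ≤ k →
    ∀ a b c : GAction, S[i]? = some a → S[j]? = some b → S[k]? = some c →
      a.2 = c.2 → b.2 = a.2

/-- A schedule is serializable iff it is equivalent to a serial schedule over the same
set of transactions. -/
def SerializableSched (S : Schedule) : Prop :=
  ∃ S', SerialG S' ∧ SameTransG S S' ∧ EquivSched S S'

/-- `E^min(S^Q)` where `Q` is the action at position `i` of `S`. -/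
def EminSQ (S : Schedule) (i : ℕ) : Set Edge :=
  (EminI (qlOf S) \ DELs (qlOf (S.take i))) ∪ ADDs (qlOf (S.take i))

/-- `E^max(S^Q)` where `Q` is the action at position `i` of `S`. -/
def EmaxSQ (S : Schedule) (i : ℕ) : Set Edge :=
  (EmaxI (qlOf S) \ DELs (qlOf (S.take i))) ∪ ADDs (qlOf (S.take i))

/-- `x` is a non-building-node of `S`: some `add(m,l,x)` or `del(m,l,x)` occurs in `S`. -/
def NonBuilding (S : Schedule) (x : Node) : Prop :=
  ∃ a ∈ S, ∃ m l, a.1 = GOp.add m l x ∨ a.1 = GOp.del m l x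

/-- `x` is a node of the graph (edge set) `G`. -/
def NodeOfGraph (G : Set Edge) (x : Node) : Prop := ∃ e ∈ G, e.1 = x ∨ e.2.2 = x

/-- `x` has a parent in the edge set `G`. -/
def HasParent (G : Set Edge) (x : Node) : Prop := ∃ e ∈ G, e.2.2 = x

/-- `PQRN(S,Q)` for the query `Q = query(n,pe)` at position `i` of `S`:
the nodes `m` of the graph `E^min(S^Q)` that are non-building-nodes, whose root
ancestor `r` in the forest `E^min(S^Q)` (the node with no parent from which `m` is
reachable, via the label path `ALabel(S^Q,m)`) is a building-node different from `n`,
and such that `L(SOP(pe)_{ALabel(S^Q,m)}) ≠ ∅`. -/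
def PQRN (S : Schedule) (i : ℕ) (n : Node) (pe : PathExpr) : Set Node :=
  {m | NodeOfGraph (EminSQ S i) m ∧ NonBuilding S m ∧
       ∃ r lp, SPath (EminSQ S i) r lp m ∧ ¬ HasParent (EminSQ S i) r ∧
         ¬ NonBuilding S r ∧ r ≠ n ∧ LSOP pe lp ≠ ∅}

/-- The answer of the query at position `i` of `S` when `S` is applied to `T`
(the query is evaluated on the tree obtained by applying the actions before it). -/
noncomputable def answerAt (S : Schedule) (i : ℕ) (T : Tree3) : Option (Set Node) :=
  match S[i]? with
  | some (GOp.query n pe, _) => (applyQL (qlOf (S.take i)) T).map (queryAnswer n pe)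
  | _ => none


/-! ### Auxiliary development for Statement 7 -/

section Aux7

/-! #### Op basics -/

lemma op_edge_fst (o : Op) : o.edge.1 = o.src := by cases o <;> rfl
lemma op_edge_tgt (o : Op) : o.edge.2.2 = o.tgt := by cases o <;> rfl

/-- `o` mentions the node `x`. -/
def mentionsN (o : Op) (x : Node) : Prop := o.src = x ∨ o.tgt = x

lemma ops_nil : ops ([] : QLSchedule) = [] := rfl
lemma ops_cons (a : QLAction) (S : QLSchedule) : ops (a :: S) = a.1 :: ops S := rfl

lemma nodePred_iff (o : Op) (x : Node) :
    ((o.src == x) || (o.tgt == x)) = true ↔ mentionsN o x := by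
  simp [mentionsN]

lemma firstNodeOp_nil (x : Node) : firstNodeOp [] x = none := rfl

lemma firstNodeOp_cons_pos {a : QLAction} (S : QLSchedule) {x : Node}
    (h : mentionsN a.1 x) : firstNodeOp (a :: S) x = some a.1 := by
  unfold firstNodeOp
  rw [ops_cons, List.find?_cons_of_pos]
  exact (nodePred_iff _ _).2 h

lemma firstNodeOp_cons_neg {a : QLAction} (S : QLSchedule) {x : Node}
    (h : ¬ mentionsN a.1 x) : firstNodeOp (a :: S) x = firstNodeOp S x := by
  unfold firstNodeOp
  rw [ops_cons, List.find?_cons_of_neg]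
  exact fun hc => h ((nodePred_iff _ _).1 hc)

lemma firstNodeOp_mem {S : QLSchedule} {x : Node} {o : Op}
    (h : firstNodeOp S x = some o) : o ∈ ops S ∧ mentionsN o x := by
  unfold firstNodeOp at h
  have hp := List.find?_some h
  exact ⟨List.mem_of_find?_eq_some h, (nodePred_iff _ _).1 hp⟩

lemma lastNodeOp_mem {S : QLSchedule} {x : Node} {o : Op}
    (h : lastNodeOp S x = some o) : o ∈ ops S ∧ mentionsN o x := by
  unfold lastNodeOp at h
  have hp := List.find?_some h
  exact ⟨List.mem_reverse.1 (List.mem_of_find?_eq_some h), (nodePred_iff _ _).1 hp⟩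

lemma firstEdgeOp_nil (e : Edge) : firstEdgeOp [] e = none := rfl

lemma firstEdgeOp_cons_pos {a : QLAction} (S : QLSchedule) {e : Edge}
    (h : a.1.edge = e) : firstEdgeOp (a :: S) e = some a.1 := by
  unfold firstEdgeOp
  rw [ops_cons, List.find?_cons_of_pos]
  simp [h]

lemma firstEdgeOp_cons_neg {a : QLAction} (S : QLSchedule) {e : Edge}
    (h : a.1.edge ≠ e) : firstEdgeOp (a :: S) e = firstEdgeOp S e := by
  unfold firstEdgeOp
  rw [ops_cons, List.find?_cons_of_neg]
  simp [h]

lemma firstEdgeOp_mem {S : QLSchedule} {e : Edge} {o : Op}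
    (h : firstEdgeOp S e = some o) : o ∈ ops S ∧ o.edge = e := by
  refine ⟨List.mem_of_find?_eq_some h, ?_⟩
  have := List.find?_some h
  simpa using this

lemma lastEdgeOp_mem {S : QLSchedule} {e : Edge} {o : Op}
    (h : lastEdgeOp S e = some o) : o ∈ ops S ∧ o.edge = e := by
  refine ⟨List.mem_reverse.1 (List.mem_of_find?_eq_some h), ?_⟩
  have := List.find?_some h
  simpa using this

lemma occursTgt_cons {a : QLAction} {S : QLSchedule} {x : Node} :
    occursTgt (a :: S) x ↔ a.1.tgt = x ∨ occursTgt S x := by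
  simp [occursTgt, ops_cons]

lemma occursTgt_nil {x : Node} : ¬ occursTgt [] x := by
  simp [occursTgt, ops_nil]

lemma firstEdgeOp_of_firstNodeOp {S : QLSchedule} {x : Node} {o : Op}
    (h : firstNodeOp S x = some o) : firstEdgeOp S o.edge = some o := by
  induction S with
  | nil => simp [firstNodeOp_nil] at h
  | cons a rest ih =>
    by_cases hm : mentionsN a.1 x
    · rw [firstNodeOp_cons_pos _ hm] at h
      cases h
      exact firstEdgeOp_cons_pos _ rfl
    · rw [firstNodeOp_cons_neg _ hm] at h
      have hmo := (firstNodeOp_mem h).2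
      have hne : a.1.edge ≠ o.edge := by
        intro he
        apply hm
        have h1 : a.1.src = o.src := by rw [← op_edge_fst, ← op_edge_fst, he]
        have h2 : a.1.tgt = o.tgt := by rw [← op_edge_tgt, ← op_edge_tgt, he]
        cases hmo with
        | inl hs => exact Or.inl (h1.trans hs)
        | inr ht => exact Or.inr (h2.trans ht)
      rw [firstEdgeOp_cons_neg _ hne]
      exact ih h

lemma firstNodeOp_of_occursTgt {S : QLSchedule} {x : Node} (h : occursTgt S x) :
    ∃ o, firstNodeOp S x = some o := by
  induction S with
  | nil => exact absurd h occursTgt_nil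
  | cons a rest ih =>
    by_cases hm : mentionsN a.1 x
    · exact ⟨a.1, firstNodeOp_cons_pos _ hm⟩
    · rw [firstNodeOp_cons_neg _ hm]
      rcases occursTgt_cons.1 h with h1 | h1
      · exact absurd (Or.inr h1) hm
      · exact ih h1

end Aux7


section Aux7b

/-! #### Paths and acyclicity of document trees -/

lemma spath_mono {G G' : Set Edge} (h : G ⊆ G') {a b : Node} {lp : List Label}
    (hp : SPath G a lp b) : SPath G' a lp b := by
  induction hp with
  | nil n => exact SPath.nil n
  | cons h1 _ ih => exact SPath.cons (h h1) ih

lemma spath_snoc {G : Set Edge} {a b c : Node} {lp : List Label} {l : Label}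
    (hp : SPath G a lp b) (he : (b, l, c) ∈ G) : SPath G a (lp ++ [l]) c := by
  induction hp with
  | nil n => exact SPath.cons he (SPath.nil c)
  | cons h1 _ ih => exact SPath.cons h1 (ih he)

lemma spath_last {G : Set Edge} {a c : Node} {lp : List Label}
    (hp : SPath G a lp c) (hne : lp ≠ []) :
    ∃ lp' l b, lp = lp' ++ [l] ∧ SPath G a lp' b ∧ (b, l, c) ∈ G := by
  induction hp with
  | nil n => exact absurd rfl hne
  | @cons m n n' l lp h1 h2 ih =>
    by_cases hnil : lp = []
    · subst hnil
      cases h2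
      exact ⟨[], l, m, rfl, SPath.nil m, h1⟩
    · obtain ⟨lp', l', b, hlp, hp', he⟩ := ih hnil
      subst hlp
      exact ⟨l :: lp', l', b, rfl, SPath.cons h1 hp', he⟩

lemma isdt_acyclic {T : Tree3} (hT : IsDT T) {n : Node} {lp : List Label}
    (hp : SPath (↑T.E) n lp n) : lp = [] := by
  obtain ⟨hroot, hends, huniq, hnr, hreach⟩ := hT
  by_contra hne
  have hnN : n ∈ T.N := by
    cases hp with
    | nil => exact absurd rfl hne
    | cons h1 h2 => exact (hends _ (Finset.mem_coe.1 h1)).1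
  have aux : ∀ y, Relation.ReflTransGen (estep ↑T.E) T.root y →
      ∀ lp, SPath (↑T.E) y lp y → lp = [] := by
    intro y hy
    induction hy with
    | refl =>
      intro lp hp
      by_contra hne2
      obtain ⟨lp', l, b, _, _, he⟩ := spath_last hp hne2
      exact hnr _ (Finset.mem_coe.1 he) rfl
    | @tail b c hab hbc ih =>
      intro lp hp
      by_contra hne2
      obtain ⟨lp', l, b', hlp, hp', he⟩ := spath_last hp hne2
      obtain ⟨l₀, he₀⟩ := hbc
      have heq : (b', l, c) = (b, l₀, c) :=
        huniq _ (Finset.mem_coe.1 he) _ (Finset.mem_coe.1 he₀) rfl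
      have hb : b' = b := congrArg Prod.fst heq
      subst hb
      have : SPath (↑T.E) b' (l :: lp') b' := SPath.cons he hp'
      exact (by simp : l :: lp' ≠ []) (ih _ this)
  exact hne (aux n (hreach n hnN) lp hp)

lemma isdt_no_selfloop {T : Tree3} (hT : IsDT T) {n : Node} {l : Label} :
    (n, l, n) ∉ T.E := by
  intro h
  have : SPath (↑T.E) n [l] n := SPath.cons (Finset.mem_coe.2 h) (SPath.nil n)
  simpa using isdt_acyclic hT this

lemma isdt_incoming {T : Tree3} (hT : IsDT T) {n : Node} (hn : n ∈ T.N)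
    (hne : n ≠ T.root) : ∃ m l, (m, l, n) ∈ T.E := by
  have h := hT.2.2.2.2 n hn
  rcases Relation.ReflTransGen.cases_tail h with h1 | ⟨c, _, hc⟩
  · exact absurd h1 hne
  · obtain ⟨l, hl⟩ := hc
    exact ⟨c, l, Finset.mem_coe.1 hl⟩

/-! #### applyOp and applyQL basics -/

lemma applyOp_add_elim {m l n : Node} {T X : Tree3}
    (h : applyOp (Op.add m l n) T = some X) :
    (m, l, n) ∉ T.E ∧ IsDT X ∧
      X = ⟨insert n T.N, insert (m, l, n) T.E, T.root⟩ := by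
  have h : (if (m, l, n) ∈ T.E ∨ ¬ IsDT (⟨insert n T.N, insert (m, l, n) T.E, T.root⟩ : Tree3)
      then none else some (⟨insert n T.N, insert (m, l, n) T.E, T.root⟩ : Tree3)) = some X := h
  split at h
  · exact absurd h (by simp)
  · next hc =>
    push_neg at hc
    cases h
    exact ⟨hc.1, hc.2, rfl⟩

lemma applyOp_del_elim {m l n : Node} {T X : Tree3}
    (h : applyOp (Op.del m l n) T = some X) :
    (m, l, n) ∈ T.E ∧ IsDT X ∧
      X = ⟨T.N.erase n, T.E.erase (m, l, n), T.root⟩ := by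
  have h : (if (m, l, n) ∉ T.E ∨ ¬ IsDT (⟨T.N.erase n, T.E.erase (m, l, n), T.root⟩ : Tree3)
      then none else some (⟨T.N.erase n, T.E.erase (m, l, n), T.root⟩ : Tree3)) = some X := h
  split at h
  · exact absurd h (by simp)
  · next hc =>
    push_neg at hc
    cases h
    exact ⟨hc.1, hc.2, rfl⟩
lemma applyOp_add_intro {m l n : Node} {T : Tree3}
    (h1 : (m, l, n) ∉ T.E)
    (h2 : IsDT ⟨insert n T.N, insert (m, l, n) T.E, T.root⟩) :
    applyOp (Op.add m l n) T = some ⟨insert n T.N, insert (m, l, n) T.E, T.root⟩ := by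
  show (if (m, l, n) ∈ T.E ∨ ¬ IsDT (⟨insert n T.N, insert (m, l, n) T.E, T.root⟩ : Tree3)
      then none else some (⟨insert n T.N, insert (m, l, n) T.E, T.root⟩ : Tree3)) = _
  rw [if_neg]
  push_neg
  exact ⟨h1, h2⟩

lemma applyOp_del_intro {m l n : Node} {T : Tree3}
    (h1 : (m, l, n) ∈ T.E)
    (h2 : IsDT ⟨T.N.erase n, T.E.erase (m, l, n), T.root⟩) :
    applyOp (Op.del m l n) T = some ⟨T.N.erase n, T.E.erase (m, l, n), T.root⟩ := by
  show (if (m, l, n) ∉ T.E ∨ ¬ IsDT (⟨T.N.erase n, T.E.erase (m, l, n), T.root⟩ : Tree3)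
      then none else some (⟨T.N.erase n, T.E.erase (m, l, n), T.root⟩ : Tree3)) = _
  rw [if_neg]
  push_neg
  exact ⟨h1, h2⟩

lemma applyOp_isDT {o : Op} {T X : Tree3} (h : applyOp o T = some X) : IsDT X := by
  cases o with
  | add m l n => exact (applyOp_add_elim h).2.1
  | del m l n => exact (applyOp_del_elim h).2.1

lemma applyOp_root {o : Op} {T X : Tree3} (h : applyOp o T = some X) :
    X.root = T.root := by
  cases o with
  | add m l n => rw [(applyOp_add_elim h).2.2]
  | del m l n => rw [(applyOp_del_elim h).2.2]

lemma add_facts {m l n : Node} {T X : Tree3} (hT : IsDT T)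
    (h : applyOp (Op.add m l n) T = some X) :
    X = ⟨insert n T.N, insert (m, l, n) T.E, T.root⟩ ∧ m ∈ T.N ∧ n ∉ T.N ∧ m ≠ n := by
  obtain ⟨hnotE, hDT, hX⟩ := applyOp_add_elim h
  subst hX
  have hmn : m ≠ n := by
    intro hmn
    subst hmn
    exact isdt_no_selfloop hDT (Finset.mem_insert_self _ _)
  have hm : m ∈ T.N := by
    have hm' := (hDT.2.1 (m, l, n) (Finset.mem_insert_self _ _)).1
    simp only [Finset.mem_insert] at hm'
    rcases hm' with h' | h'
    · exact absurd h' hmn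
    · exact h'
  have hn : n ∉ T.N := by
    intro hn
    by_cases hnr : n = T.root
    · exact hDT.2.2.2.1 (m, l, n) (Finset.mem_insert_self _ _) hnr
    · obtain ⟨m₂, l₂, he₂⟩ := isdt_incoming hT hn hnr
      have heq : (m₂, l₂, n) = (m, l, n) :=
        hDT.2.2.1 _ (Finset.mem_insert_of_mem he₂) _ (Finset.mem_insert_self _ _) rfl
      exact hnotE (heq ▸ he₂)
  exact ⟨rfl, hm, hn, hmn⟩

lemma del_facts {m l n : Node} {T X : Tree3} (hT : IsDT T)
    (h : applyOp (Op.del m l n) T = some X) :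
    X = ⟨T.N.erase n, T.E.erase (m, l, n), T.root⟩ ∧ (m, l, n) ∈ T.E ∧ m ≠ n ∧
      n ≠ T.root ∧ m ∈ T.N ∧ n ∈ T.N ∧ ∀ l' p, (n, l', p) ∉ T.E := by
  obtain ⟨hE, hDT, hX⟩ := applyOp_del_elim h
  subst hX
  have hmn : m ≠ n := by
    intro hmn
    subst hmn
    exact isdt_no_selfloop hT hE
  have hout : ∀ l' p, (n, l', p) ∉ T.E := by
    intro l' p hp
    by_cases heq : (n, l', p) = (m, l, n)
    · exact hmn (congrArg Prod.fst heq).symm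
    · have hmem : (n, l', p) ∈ T.E.erase (m, l, n) := Finset.mem_erase.2 ⟨heq, hp⟩
      have := (hDT.2.1 _ hmem).1
      simp at this
  exact ⟨rfl, hE, hmn, fun hr => hT.2.2.2.1 _ hE hr, (hT.2.1 _ hE).1, (hT.2.1 _ hE).2,
    hout⟩

lemma applyQL_nil (T : Tree3) : applyQL [] T = some T := rfl

lemma applyQL_cons (a : QLAction) (S : QLSchedule) (T : Tree3) :
    applyQL (a :: S) T = (applyOp a.1 T).bind (applyQL S) := rfl

lemma applyQL_append (S₁ S₂ : QLSchedule) (T : Tree3) :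
    applyQL (S₁ ++ S₂) T = (applyQL S₁ T).bind (applyQL S₂) := by
  induction S₁ generalizing T with
  | nil => simp [applyQL_nil]
  | cons a S ih =>
    rw [List.cons_append, applyQL_cons, applyQL_cons]
    cases h : applyOp a.1 T with
    | none => rfl
    | some t => exact ih t

lemma applyQL_cons_isSome {a : QLAction} {S : QLSchedule} {T : Tree3} :
    (applyQL (a :: S) T).isSome ↔
      ∃ X, applyOp a.1 T = some X ∧ (applyQL S X).isSome := by
  rw [applyQL_cons]
  cases h : applyOp a.1 T <;> simp

lemma applyQL_isDT {S : QLSchedule} {T X : Tree3} (hT : IsDT T)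
    (h : applyQL S T = some X) : IsDT X := by
  induction S generalizing T with
  | nil => cases h; exact hT
  | cons a rest ih =>
    rw [applyQL_cons] at h
    cases ha : applyOp a.1 T with
    | none => rw [ha] at h; cases h
    | some T₁ =>
      rw [ha] at h
      exact ih (applyOp_isDT ha) h

end Aux7b


section Aux7c

/-! #### Duality: reversing a schedule and swapping add/del -/

def dOp : Op → Op
  | Op.add m l n => Op.del m l n
  | Op.del m l n => Op.add m l n

def dual (S : QLSchedule) : QLSchedule := (S.map (fun a => (dOp a.1, a.2))).reverse

lemma dOp_src (o : Op) : (dOp o).src = o.src := by cases o <;> rfl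
lemma dOp_tgt (o : Op) : (dOp o).tgt = o.tgt := by cases o <;> rfl
lemma dOp_edge (o : Op) : (dOp o).edge = o.edge := by cases o <;> rfl
lemma dOp_dOp (o : Op) : dOp (dOp o) = o := by cases o <;> rfl

lemma ops_dual (S : QLSchedule) : ops (dual S) = ((ops S).map dOp).reverse := by
  simp only [dual, ops, ← List.map_reverse, List.map_map]
  rfl

lemma dual_dual (S : QLSchedule) : dual (dual S) = S := by
  unfold dual
  rw [← List.map_reverse, List.reverse_reverse, List.map_map]
  have : ((fun a : QLAction => (dOp a.1, a.2)) ∘ fun a : QLAction => (dOp a.1, a.2)) = id := by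
    funext a
    simp [dOp_dOp]
  rw [this, List.map_id]

lemma applyOp_dual {o : Op} {T X : Tree3} (hT : IsDT T) (h : applyOp o T = some X) :
    applyOp (dOp o) X = some T := by
  cases o with
  | add m l n =>
    obtain ⟨hX, hm, hn, hmn⟩ := add_facts hT h
    obtain ⟨hnotE, hDTX, _⟩ := applyOp_add_elim h
    subst hX
    have h1 : (insert n T.N).erase n = T.N := Finset.erase_insert hn
    have h2 : (insert (m, l, n) T.E).erase (m, l, n) = T.E := Finset.erase_insert hnotE
    show applyOp (Op.del m l n) _ = some T
    have h3 := applyOp_del_intro (T := ⟨insert n T.N, insert (m, l, n) T.E, T.root⟩)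
      (m := m) (l := l) (n := n) (Finset.mem_insert_self _ _) ?_
    · rw [h3]
      congr 1
      show (⟨_, _, _⟩ : Tree3) = T
      rw [show ((⟨insert n T.N, insert (m,l,n) T.E, T.root⟩ : Tree3).N.erase n) = T.N from h1,
        show ((⟨insert n T.N, insert (m,l,n) T.E, T.root⟩ : Tree3).E.erase (m,l,n)) = T.E from h2]
    · show IsDT ⟨(insert n T.N).erase n, (insert (m,l,n) T.E).erase (m,l,n), T.root⟩
      rw [h1, h2]
      exact hT
  | del m l n =>
    obtain ⟨hX, hE, hmn, hnr, hmN, hnN, hout⟩ := del_facts hT h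
    subst hX
    have h1 : insert n (T.N.erase n) = T.N := Finset.insert_erase hnN
    have h2 : insert (m, l, n) (T.E.erase (m, l, n)) = T.E := Finset.insert_erase hE
    show applyOp (Op.add m l n) _ = some T
    have h3 := applyOp_add_intro (T := ⟨T.N.erase n, T.E.erase (m, l, n), T.root⟩)
      (m := m) (l := l) (n := n) (by simp) ?_
    · rw [h3]
      congr 1
      show (⟨_, _, _⟩ : Tree3) = T
      rw [show (insert n ((⟨T.N.erase n, T.E.erase (m,l,n), T.root⟩ : Tree3).N)) = T.N from h1,
        show (insert (m,l,n) ((⟨T.N.erase n, T.E.erase (m,l,n), T.root⟩ : Tree3).E)) = T.E from h2]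
    · show IsDT ⟨insert n (T.N.erase n), insert (m,l,n) (T.E.erase (m,l,n)), T.root⟩
      rw [h1, h2]
      exact hT

lemma applyQL_dual {S : QLSchedule} {T X : Tree3} (hT : IsDT T)
    (h : applyQL S T = some X) : applyQL (dual S) X = some T := by
  induction S generalizing T with
  | nil =>
    cases h
    rfl
  | cons a rest ih =>
    rw [applyQL_cons] at h
    cases ha : applyOp a.1 T with
    | none => rw [ha] at h; cases h
    | some T₁ =>
      rw [ha] at h
      have hT₁ := applyOp_isDT ha
      have hrest := ih hT₁ h
      have hdual : dual (a :: rest) = dual rest ++ [(dOp a.1, a.2)] := by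
        unfold dual
        rw [List.map_cons, List.reverse_cons]
      rw [hdual, applyQL_append, hrest]
      show applyQL [(dOp a.1, a.2)] T₁ = some T
      rw [applyQL_cons]
      show (applyOp (dOp a.1) T₁).bind (applyQL []) = some T
      rw [applyOp_dual hT ha]
      rfl

lemma firstNodeOp_dual (S : QLSchedule) (x : Node) :
    firstNodeOp (dual S) x = (lastNodeOp S x).map dOp := by
  unfold firstNodeOp lastNodeOp
  have hpred : ((fun o : Op => o.src == x || o.tgt == x) ∘ dOp)
      = (fun o : Op => o.src == x || o.tgt == x) := by
    funext o
    simp [Function.comp, dOp_src, dOp_tgt]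
  rw [ops_dual, ← List.map_reverse, List.find?_map, hpred]

lemma firstEdgeOp_dual (S : QLSchedule) (e : Edge) :
    firstEdgeOp (dual S) e = (lastEdgeOp S e).map dOp := by
  unfold firstEdgeOp lastEdgeOp
  have hpred : ((fun o : Op => o.edge == e) ∘ dOp) = (fun o : Op => o.edge == e) := by
    funext o
    simp [Function.comp, dOp_edge]
  rw [ops_dual, ← List.map_reverse, List.find?_map, hpred]

lemma occursTgt_dual (S : QLSchedule) (x : Node) :
    occursTgt (dual S) x ↔ occursTgt S x := by
  unfold occursTgt
  rw [ops_dual]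
  constructor
  · rintro ⟨o, ho, hx⟩
    rw [List.mem_reverse, List.mem_map] at ho
    obtain ⟨o', ho', rfl⟩ := ho
    exact ⟨o', ho', by rw [← dOp_tgt]; exact hx⟩
  · rintro ⟨o, ho, hx⟩
    exact ⟨dOp o, by rw [List.mem_reverse, List.mem_map]; exact ⟨o, ho, rfl⟩,
      by rw [dOp_tgt]; exact hx⟩

lemma map_dOp_eq_add {o : Option Op} {m l n : Node} :
    o.map dOp = some (Op.add m l n) ↔ o = some (Op.del m l n) := by
  cases o with
  | none => simp
  | some a => cases a <;> simp [dOp]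

lemma map_dOp_eq_del {o : Option Op} {m l n : Node} :
    o.map dOp = some (Op.del m l n) ↔ o = some (Op.add m l n) := by
  cases o with
  | none => simp
  | some a => cases a <;> simp [dOp]

lemma NminI_dual (S : QLSchedule) : NminI (dual S) = NminO S := by
  ext x
  simp only [NminI, NminO, Set.mem_union, Set.mem_setOf_eq, firstNodeOp_dual,
    map_dOp_eq_add, map_dOp_eq_del]

lemma NmaxI_dual (S : QLSchedule) : NmaxI (dual S) = NmaxO S := by
  ext x
  simp only [NmaxI, NmaxO, Set.mem_setOf_eq, firstNodeOp_dual, map_dOp_eq_add]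

lemma EminI_dual (S : QLSchedule) : EminI (dual S) = EminO S := by
  ext e
  simp only [EminI, EminO, Set.mem_setOf_eq, firstEdgeOp_dual, map_dOp_eq_del]

lemma EmaxI_dual (S : QLSchedule) : EmaxI (dual S) = EmaxO S := by
  unfold EmaxI EmaxO
  rw [EminI_dual]
  ext e
  simp only [Set.mem_union, Set.mem_setOf_eq, occursTgt_dual]

/-! #### Input and output conditions -/

def InConds (S : QLSchedule) (T : Tree3) : Prop :=
  NminI S ⊆ ↑T.N ∧ (↑T.N : Set Node) ⊆ NmaxI S ∧ EminI S ⊆ ↑T.E ∧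
    (↑T.E : Set Edge) ⊆ EmaxI S

def OutConds (S : QLSchedule) (T : Tree3) : Prop :=
  NminO S ⊆ ↑T.N ∧ (↑T.N : Set Node) ⊆ NmaxO S ∧ EminO S ⊆ ↑T.E ∧
    (↑T.E : Set Edge) ⊆ EmaxO S

lemma inConds_dual (S : QLSchedule) (T : Tree3) :
    InConds (dual S) T ↔ OutConds S T := by
  unfold InConds OutConds
  rw [NminI_dual, NmaxI_dual, EminI_dual, EmaxI_dual]

end Aux7c


section Aux7d

lemma mem_NminI {S : QLSchedule} {x : Node} :
    x ∈ NminI S ↔ (∃ l n, firstNodeOp S x = some (Op.add x l n)) ∨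
      (∃ l n, firstNodeOp S x = some (Op.del x l n)) ∨
      (∃ m l, firstNodeOp S x = some (Op.del m l x)) := by
  simp [NminI, Set.mem_union, Set.mem_setOf_eq, or_assoc]

lemma mem_NmaxI {S : QLSchedule} {x : Node} :
    x ∈ NmaxI S ↔ ¬ ∃ m l, firstNodeOp S x = some (Op.add m l x) := Iff.rfl

lemma mem_EminI {S : QLSchedule} {e : Edge} :
    e ∈ EminI S ↔ firstEdgeOp S e = some (Op.del e.1 e.2.1 e.2.2) := Iff.rfl

lemma mem_EmaxI {S : QLSchedule} {e : Edge} :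
    e ∈ EmaxI S ↔ e ∈ EminI S ∨ (¬ occursTgt S e.1 ∧ ¬ occursTgt S e.2.2) := Iff.rfl

lemma edge_eta (e : Edge) : (e.1, e.2.1, e.2.2) = e := rfl

/-- If a schedule is defined on `T`, then `T` satisfies the input conditions. -/
lemma B_in (S : QLSchedule) : ∀ (T : Tree3), IsDT T → (applyQL S T).isSome → InConds S T := by
  induction S with
  | nil =>
    intro T hT _
    refine ⟨?_, ?_, ?_, ?_⟩
    · intro x hx
      rw [mem_NminI] at hx
      rcases hx with ⟨l, n, h⟩ | ⟨l, n, h⟩ | ⟨m, l, h⟩ <;> rw [firstNodeOp_nil] at h <;> cases h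
    · intro x _
      rintro ⟨m, l, h⟩
      rw [firstNodeOp_nil] at h
      cases h
    · intro e he
      rw [mem_EminI, firstEdgeOp_nil] at he
      cases he
    · intro e _
      exact Or.inr ⟨occursTgt_nil, occursTgt_nil⟩
  | cons a rest ih =>
    intro T hT hdef
    obtain ⟨T₁, ha, hrestdef⟩ := applyQL_cons_isSome.mp hdef
    have hT₁ : IsDT T₁ := applyOp_isDT ha
    obtain ⟨ihNmin, ihNmax, ihEmin, ihEmax⟩ := ih T₁ hT₁ hrestdef
    cases hop : a.1 with
    | add m l n =>
      rw [hop] at ha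
      have hnotE := (applyOp_add_elim ha).1
      obtain ⟨hX, hmN, hnN, hmn⟩ := add_facts hT ha
      have hN₁ : T₁.N = insert n T.N := by rw [hX]
      have hE₁ : T₁.E = insert (m, l, n) T.E := by rw [hX]
      refine ⟨?_, ?_, ?_, ?_⟩
      · -- NminI ⊆ T.N
        intro x hx
        rw [mem_NminI] at hx
        by_cases hm : mentionsN a.1 x
        · rw [firstNodeOp_cons_pos rest hm, hop] at hx
          rcases hx with ⟨l', n', h⟩ | ⟨l', n', h⟩ | ⟨m', l', h⟩
          · obtain ⟨h1, -, -⟩ := Op.add.inj (Option.some.inj h)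
            exact Finset.mem_coe.2 (h1 ▸ hmN)
          · exact Op.noConfusion (Option.some.inj h)
          · exact Op.noConfusion (Option.some.inj h)
        · rw [firstNodeOp_cons_neg rest hm] at hx
          have hx' : x ∈ NminI rest := mem_NminI.2 hx
          have hxn : x ≠ n := by
            intro hxe
            exact hm (Or.inr (by rw [hop, hxe]; rfl))
          have hmem : x ∈ T₁.N := Finset.mem_coe.1 (ihNmin hx')
          rw [hN₁, Finset.mem_insert] at hmem
          rcases hmem with h' | h'
          · exact absurd h' hxn
          · exact Finset.mem_coe.2 h'
      · -- T.N ⊆ NmaxI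
        intro x hxN
        rintro ⟨m', l', h⟩
        by_cases hm : mentionsN a.1 x
        · rw [firstNodeOp_cons_pos rest hm, hop] at h
          obtain ⟨-, -, h3⟩ := Op.add.inj (Option.some.inj h)
          exact hnN (h3 ▸ Finset.mem_coe.1 hxN)
        · rw [firstNodeOp_cons_neg rest hm] at h
          have hmem : x ∈ (↑T₁.N : Set Node) := by
            rw [hN₁]
            exact Finset.mem_coe.2 (Finset.mem_insert_of_mem (Finset.mem_coe.1 hxN))
          exact (ihNmax hmem) ⟨m', l', h⟩
      · -- EminI ⊆ T.E
        intro e he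
        rw [mem_EminI] at he
        by_cases hm : a.1.edge = e
        · rw [firstEdgeOp_cons_pos rest hm, hop] at he
          exact Op.noConfusion (Option.some.inj he)
        · rw [firstEdgeOp_cons_neg rest hm] at he
          have hmem : e ∈ T₁.E := Finset.mem_coe.1 (ihEmin (mem_EminI.2 he))
          rw [hE₁, Finset.mem_insert] at hmem
          rcases hmem with h' | h'
          · exact absurd (by rw [hop, h']; rfl : a.1.edge = e) hm
          · exact Finset.mem_coe.2 h'
      · -- T.E ⊆ EmaxI
        intro e heT
        have heT' : e ∈ (↑T₁.E : Set Edge) := by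
          rw [hE₁]
          exact Finset.mem_coe.2 (Finset.mem_insert_of_mem (Finset.mem_coe.1 heT))
        rcases mem_EmaxI.1 (ihEmax heT') with hmin | ⟨h1, h2⟩
        · rw [mem_EminI] at hmin
          refine Or.inl (mem_EminI.2 ?_)
          have hne : a.1.edge ≠ e := by
            rw [hop]
            intro h
            rw [← h] at heT
            exact hnotE (Finset.mem_coe.1 heT)
          rw [firstEdgeOp_cons_neg rest hne]
          exact hmin
        · refine Or.inr ⟨?_, ?_⟩
          · rw [occursTgt_cons]
            rintro (h | h)
            · rw [hop] at h
              have : n = e.1 := h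
              have he1N : e.1 ∈ T.N := (hT.2.1 e (Finset.mem_coe.1 heT)).1
              exact hnN (this ▸ he1N)
            · exact h1 h
          · rw [occursTgt_cons]
            rintro (h | h)
            · rw [hop] at h
              have : n = e.2.2 := h
              have he2N : e.2.2 ∈ T.N := (hT.2.1 e (Finset.mem_coe.1 heT)).2
              exact hnN (this ▸ he2N)
            · exact h2 h
    | del m l n =>
      rw [hop] at ha
      obtain ⟨hX, hE, hmn, hnroot, hmN, hnN, hout⟩ := del_facts hT ha
      have hN₁ : T₁.N = T.N.erase n := by rw [hX]
      have hE₁ : T₁.E = T.E.erase (m, l, n) := by rw [hX]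
      refine ⟨?_, ?_, ?_, ?_⟩
      · intro x hx
        rw [mem_NminI] at hx
        by_cases hm : mentionsN a.1 x
        · rw [firstNodeOp_cons_pos rest hm, hop] at hx
          rcases hx with ⟨l', n', h⟩ | ⟨l', n', h⟩ | ⟨m', l', h⟩
          · exact Op.noConfusion (Option.some.inj h)
          · obtain ⟨h1, -, -⟩ := Op.del.inj (Option.some.inj h)
            exact Finset.mem_coe.2 (h1 ▸ hmN)
          · obtain ⟨-, -, h3⟩ := Op.del.inj (Option.some.inj h)
            exact Finset.mem_coe.2 (h3 ▸ hnN)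
        · rw [firstNodeOp_cons_neg rest hm] at hx
          have hmem : x ∈ T₁.N := Finset.mem_coe.1 (ihNmin (mem_NminI.2 hx))
          rw [hN₁] at hmem
          exact Finset.mem_coe.2 (Finset.mem_of_mem_erase hmem)
      · intro x hxN
        rintro ⟨m', l', h⟩
        by_cases hm : mentionsN a.1 x
        · rw [firstNodeOp_cons_pos rest hm, hop] at h
          exact Op.noConfusion (Option.some.inj h)
        · rw [firstNodeOp_cons_neg rest hm] at h
          have hxn : x ≠ n := by
            intro hxe
            exact hm (Or.inr (by rw [hop, hxe]; rfl))
          have hmem : x ∈ (↑T₁.N : Set Node) := by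
            rw [hN₁]
            exact Finset.mem_coe.2 (Finset.mem_erase.2 ⟨hxn, Finset.mem_coe.1 hxN⟩)
          exact (ihNmax hmem) ⟨m', l', h⟩
      · intro e he
        rw [mem_EminI] at he
        by_cases hm : a.1.edge = e
        · have heq : e = (m, l, n) := by rw [← hm, hop]; rfl
          rw [heq]
          exact Finset.mem_coe.2 hE
        · rw [firstEdgeOp_cons_neg rest hm] at he
          have hmem : e ∈ T₁.E := Finset.mem_coe.1 (ihEmin (mem_EminI.2 he))
          rw [hE₁] at hmem
          exact Finset.mem_coe.2 (Finset.mem_of_mem_erase hmem)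
      · intro e heT
        by_cases heq : e = (m, l, n)
        · refine Or.inl (mem_EminI.2 ?_)
          have hedge : a.1.edge = e := by rw [hop, heq]; rfl
          rw [firstEdgeOp_cons_pos rest hedge, hop, heq]
        · have heT₁ : e ∈ (↑T₁.E : Set Edge) := by
            rw [hE₁]
            exact Finset.mem_coe.2 (Finset.mem_erase.2 ⟨heq, Finset.mem_coe.1 heT⟩)
          rcases mem_EmaxI.1 (ihEmax heT₁) with hmin | ⟨h1, h2⟩
          · rw [mem_EminI] at hmin
            refine Or.inl (mem_EminI.2 ?_)
            have hne : a.1.edge ≠ e := by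
              rw [hop]
              exact fun h => heq h.symm
            rw [firstEdgeOp_cons_neg rest hne]
            exact hmin
          · refine Or.inr ⟨?_, ?_⟩
            · rw [occursTgt_cons]
              rintro (h | h)
              · rw [hop] at h
                have hn1 : n = e.1 := h
                have : (e.1, e.2.1, e.2.2) ∈ T.E := by rw [edge_eta]; exact Finset.mem_coe.1 heT
                rw [← hn1] at this
                exact hout _ _ this
              · exact h1 h
            · rw [occursTgt_cons]
              rintro (h | h)
              · rw [hop] at h
                have hn2 : n = e.2.2 := h
                have huniqe : e = (m, l, n) :=
                  hT.2.2.1 e (Finset.mem_coe.1 heT) (m, l, n) hE hn2.symm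
                exact heq huniqe
              · exact h2 h

end Aux7d


section Aux7e

lemma reach_erase {T : Tree3} (hT : IsDT T) {e : Edge}
    (hnout : ∀ l' p, (e.2.2, l', p) ∉ T.E) :
    ∀ x, Relation.ReflTransGen (estep ↑T.E) T.root x → x ≠ e.2.2 →
      Relation.ReflTransGen (estep ↑(T.E.erase e)) T.root x := by
  intro x h
  induction h with
  | refl => intro _; exact Relation.ReflTransGen.refl
  | @tail b c hab hbc ih =>
    intro hc
    obtain ⟨l'', hbc'⟩ := hbc
    have hb : b ≠ e.2.2 := by
      intro hbe
      exact hnout l'' c (hbe ▸ Finset.mem_coe.1 hbc')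
    have hedge : (b, l'', c) ≠ e := by
      intro hbce
      exact hc (congrArg (fun t : Edge => t.2.2) hbce)
    exact (ih hb).tail ⟨l'', Finset.mem_coe.2 (Finset.mem_erase.2 ⟨hedge, Finset.mem_coe.1 hbc'⟩)⟩

lemma estep_insert_mono {G : Finset Edge} {f : Edge} {a b : Node} (h : estep ↑G a b) :
    estep (↑(insert f G)) a b := by
  obtain ⟨l₀, h₀⟩ := h
  exact ⟨l₀, Finset.mem_coe.2 (Finset.mem_insert_of_mem (Finset.mem_coe.1 h₀))⟩

/-- If a consistent schedule is defined on some tree, it is defined on every tree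
satisfying the input conditions. -/
lemma A_def (S : QLSchedule) :
    ∀ (T₀ T : Tree3), IsDT T₀ → (applyQL S T₀).isSome → IsDT T → InConds S T →
      (applyQL S T).isSome := by
  induction S with
  | nil =>
    intro T₀ T _ _ _ _
    simp [applyQL_nil]
  | cons a rest ih =>
    intro T₀ T hT₀ hdef₀ hT hin
    obtain ⟨T₀₁, h01, hrest0⟩ := applyQL_cons_isSome.mp hdef₀
    have hT₀₁ : IsDT T₀₁ := applyOp_isDT h01
    obtain ⟨rNmin, rNmax, rEmin, rEmax⟩ := B_in rest T₀₁ hT₀₁ hrest0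
    obtain ⟨hNmin, hNmax, hEmin, hEmax⟩ := hin
    cases hop : a.1 with
    | add m l n =>
      rw [hop] at h01
      obtain ⟨hX0, hm0, hn0, hmn0⟩ := add_facts hT₀ h01
      have hfirstm : firstNodeOp (a :: rest) m = some (Op.add m l n) := by
        rw [firstNodeOp_cons_pos rest (by rw [hop]; exact Or.inl rfl), hop]
      have hfirstn : firstNodeOp (a :: rest) n = some (Op.add m l n) := by
        rw [firstNodeOp_cons_pos rest (by rw [hop]; exact Or.inr rfl), hop]
      have hmT : m ∈ T.N := Finset.mem_coe.1 (hNmin (mem_NminI.2 (Or.inl ⟨l, n, hfirstm⟩)))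
      have hnT : n ∉ T.N := by
        intro hnT
        exact (hNmax (Finset.mem_coe.2 hnT)) ⟨m, l, hfirstn⟩
      have hmn : m ≠ n := fun h => hnT (h ▸ hmT)
      have heT : (m, l, n) ∉ T.E := fun h => hnT ((hT.2.1 _ h).2)
      have hT₁ : IsDT ⟨insert n T.N, insert (m, l, n) T.E, T.root⟩ := by
        refine ⟨?_, ?_, ?_, ?_, ?_⟩
        · show T.root ∈ insert n T.N
          exact Finset.mem_insert_of_mem hT.1
        · intro e he
          replace he : e ∈ insert (m, l, n) T.E := he
          rw [Finset.mem_insert] at he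
          show e.1 ∈ insert n T.N ∧ e.2.2 ∈ insert n T.N
          rcases he with rfl | he
          · exact ⟨Finset.mem_insert_of_mem hmT, Finset.mem_insert_self _ _⟩
          · exact ⟨Finset.mem_insert_of_mem (hT.2.1 e he).1,
              Finset.mem_insert_of_mem (hT.2.1 e he).2⟩
        · intro e he e' he' htgt
          replace he : e ∈ insert (m, l, n) T.E := he
          replace he' : e' ∈ insert (m, l, n) T.E := he'
          rw [Finset.mem_insert] at he he'
          rcases he with rfl | he <;> rcases he' with rfl | he'
          · rfl
          · exact absurd ((hT.2.1 e' he').2)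
              (fun hh => hnT ((show n = e'.2.2 from htgt).symm ▸ hh))
          · exact absurd ((hT.2.1 e he).2)
              (fun hh => hnT ((show e.2.2 = n from htgt) ▸ hh))
          · exact hT.2.2.1 e he e' he' htgt
        · intro e he
          replace he : e ∈ insert (m, l, n) T.E := he
          rw [Finset.mem_insert] at he
          show e.2.2 ≠ T.root
          rcases he with rfl | he
          · exact fun h => hnT ((show n = T.root from h).symm ▸ hT.1)
          · exact hT.2.2.2.1 e he
        · intro x hx
          replace hx : x ∈ insert n T.N := hx
          rw [Finset.mem_insert] at hx
          show Relation.ReflTransGen (estep ↑(insert (m, l, n) T.E)) T.root x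
          rcases hx with rfl | hx
          · exact (Relation.ReflTransGen.mono (fun _ _ => estep_insert_mono) _ _
              (hT.2.2.2.2 m hmT)).tail ⟨l, Finset.mem_coe.2 (Finset.mem_insert_self _ _)⟩
          · exact Relation.ReflTransGen.mono (fun _ _ => estep_insert_mono) _ _
              (hT.2.2.2.2 x hx)
      have hstep : applyOp a.1 T = some ⟨insert n T.N, insert (m, l, n) T.E, T.root⟩ := by
        rw [hop]
        exact applyOp_add_intro heT hT₁
      have hinrest : InConds rest ⟨insert n T.N, insert (m, l, n) T.E, T.root⟩ := by
        refine ⟨?_, ?_, ?_, ?_⟩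
        · intro x hx
          refine Finset.mem_coe.2 ?_
          show x ∈ insert n T.N
          by_cases hxn : x = n
          · exact hxn ▸ Finset.mem_insert_self _ _
          by_cases hxm : x = m
          · exact Finset.mem_insert_of_mem (hxm ▸ hmT)
          · have hmen : ¬ mentionsN a.1 x := by
              rw [hop]
              rintro (hs | ht)
              · exact hxm hs.symm
              · exact hxn ht.symm
            rw [mem_NminI] at hx
            have hx' : x ∈ NminI (a :: rest) := by
              rw [mem_NminI]
              rw [← firstNodeOp_cons_neg rest hmen] at hx
              exact hx
            exact Finset.mem_insert_of_mem (Finset.mem_coe.1 (hNmin hx'))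
        · intro x hx
          rintro ⟨m', l', h⟩
          replace hx : x ∈ insert n T.N := Finset.mem_coe.1 hx
          by_cases hxn : x = n
          · have hx0 : x ∈ (↑T₀₁.N : Set Node) := by
              rw [hX0]
              show x ∈ (↑(insert n T₀.N) : Set Node)
              rw [hxn]
              exact Finset.mem_coe.2 (Finset.mem_insert_self _ _)
            exact (rNmax hx0) ⟨m', l', h⟩
          by_cases hxm : x = m
          · have hx0 : x ∈ (↑T₀₁.N : Set Node) := by
              rw [hX0]
              show x ∈ (↑(insert n T₀.N) : Set Node)
              rw [hxm]
              exact Finset.mem_coe.2 (Finset.mem_insert_of_mem hm0)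
            exact (rNmax hx0) ⟨m', l', h⟩
          · have hmen : ¬ mentionsN a.1 x := by
              rw [hop]
              rintro (hs | ht)
              · exact hxm hs.symm
              · exact hxn ht.symm
            have hxT : x ∈ T.N := by
              rw [Finset.mem_insert] at hx
              rcases hx with h' | h'
              · exact absurd h' hxn
              · exact h'
            exact (hNmax (Finset.mem_coe.2 hxT))
              ⟨m', l', by rw [firstNodeOp_cons_neg rest hmen]; exact h⟩
        · intro e he
          refine Finset.mem_coe.2 ?_
          show e ∈ insert (m, l, n) T.E
          by_cases heq : e = (m, l, n)
          · exact heq ▸ Finset.mem_insert_self _ _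
          · have hne : a.1.edge ≠ e := by
              rw [hop]
              exact fun h => heq (by rw [← h]; rfl)
            have he' : e ∈ EminI (a :: rest) := mem_EminI.2
              (by rw [firstEdgeOp_cons_neg rest hne]; exact mem_EminI.1 he)
            exact Finset.mem_insert_of_mem (Finset.mem_coe.1 (hEmin he'))
        · intro e he
          replace he : e ∈ insert (m, l, n) T.E := Finset.mem_coe.1 he
          rw [Finset.mem_insert] at he
          rcases he with rfl | heT2
          · have he0 : (m, l, n) ∈ (↑T₀₁.E : Set Edge) := by
              rw [hX0]
              show (m, l, n) ∈ (↑(insert (m, l, n) T₀.E) : Set Edge)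
              exact Finset.mem_coe.2 (Finset.mem_insert_self _ _)
            exact rEmax he0
          · rcases mem_EmaxI.1 (hEmax (Finset.mem_coe.2 heT2)) with hmin | ⟨h1, h2⟩
            · refine Or.inl (mem_EminI.2 ?_)
              rw [mem_EminI] at hmin
              have hne : a.1.edge ≠ e := by
                rw [hop]
                intro h
                rw [← h] at heT2
                exact heT heT2
              rw [firstEdgeOp_cons_neg rest hne] at hmin
              exact hmin
            · exact Or.inr ⟨fun h => h1 (occursTgt_cons.2 (Or.inr h)),
                fun h => h2 (occursTgt_cons.2 (Or.inr h))⟩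
      exact applyQL_cons_isSome.2 ⟨_, hstep, ih T₀₁ _ hT₀₁ hrest0 hT₁ hinrest⟩
    | del m l n =>
      rw [hop] at h01
      obtain ⟨hX0, hE0, hmn0, hnroot0, hm0, hn0, hout0⟩ := del_facts hT₀ h01
      have hfirstE : firstEdgeOp (a :: rest) (m, l, n) = some (Op.del m l n) := by
        rw [firstEdgeOp_cons_pos rest (by rw [hop]; rfl), hop]
      have heT : (m, l, n) ∈ T.E := Finset.mem_coe.1 (hEmin (mem_EminI.2 hfirstE))
      have hmn : m ≠ n := fun h => isdt_no_selfloop hT (h ▸ heT)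
      have hnroot : n ≠ T.root := hT.2.2.2.1 _ heT
      have hoccn : occursTgt (a :: rest) n := occursTgt_cons.2 (Or.inl (by rw [hop]; rfl))
      have hmT : m ∈ T.N := (hT.2.1 _ heT).1
      have hout : ∀ l' p, (n, l', p) ∉ T.E := by
        intro l' p hp
        rcases mem_EmaxI.1 (hEmax (Finset.mem_coe.2 hp)) with hmin | ⟨h1, _⟩
        · rw [mem_EminI] at hmin
          by_cases heq : a.1.edge = ((n, l', p) : Edge)
          · rw [hop] at heq
            exact hmn (congrArg Prod.fst heq)
          · rw [firstEdgeOp_cons_neg rest heq] at hmin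
            have hmem : ((n, l', p) : Edge) ∈ T₀₁.E := Finset.mem_coe.1 (rEmin (mem_EminI.2 hmin))
            have hnn : n ∈ T₀₁.N := (hT₀₁.2.1 _ hmem).1
            rw [hX0] at hnn
            replace hnn : n ∈ T₀.N.erase n := hnn
            exact (Finset.mem_erase.1 hnn).1 rfl
        · exact h1 hoccn
      have hT₁' : IsDT ⟨T.N.erase n, T.E.erase (m, l, n), T.root⟩ := by
        refine ⟨?_, ?_, ?_, ?_, ?_⟩
        · show T.root ∈ T.N.erase n
          exact Finset.mem_erase.2 ⟨Ne.symm hnroot, hT.1⟩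
        · intro e he
          obtain ⟨hne, heE⟩ := Finset.mem_erase.1 he
          show e.1 ∈ T.N.erase n ∧ e.2.2 ∈ T.N.erase n
          refine ⟨Finset.mem_erase.2 ⟨?_, (hT.2.1 e heE).1⟩,
            Finset.mem_erase.2 ⟨?_, (hT.2.1 e heE).2⟩⟩
          · intro h
            apply hout e.2.1 e.2.2
            rw [← h, edge_eta]
            exact heE
          · intro h
            exact hne (hT.2.2.1 e heE (m, l, n) heT (by rw [h]))
        · intro e he e' he' htgt
          exact hT.2.2.1 e (Finset.mem_of_mem_erase he) e' (Finset.mem_of_mem_erase he') htgt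
        · intro e he
          exact hT.2.2.2.1 e (Finset.mem_of_mem_erase he)
        · intro x hx
          obtain ⟨hxn, hxN⟩ := Finset.mem_erase.1 hx
          show Relation.ReflTransGen (estep ↑(T.E.erase (m, l, n))) T.root x
          exact reach_erase hT (e := (m, l, n)) hout x (hT.2.2.2.2 x hxN) hxn
      have hstep : applyOp a.1 T = some ⟨T.N.erase n, T.E.erase (m, l, n), T.root⟩ := by
        rw [hop]
        exact applyOp_del_intro heT hT₁'
      have hinrest : InConds rest ⟨T.N.erase n, T.E.erase (m, l, n), T.root⟩ := by
        refine ⟨?_, ?_, ?_, ?_⟩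
        · intro x hx
          refine Finset.mem_coe.2 ?_
          show x ∈ T.N.erase n
          by_cases hxn : x = n
          · exfalso
            have hmem : x ∈ T₀₁.N := Finset.mem_coe.1 (rNmin hx)
            rw [hX0] at hmem
            replace hmem : x ∈ T₀.N.erase n := hmem
            exact (Finset.mem_erase.1 hmem).1 hxn
          by_cases hxm : x = m
          · exact Finset.mem_erase.2 ⟨hxn, hxm ▸ hmT⟩
          · have hmen : ¬ mentionsN a.1 x := by
              rw [hop]
              rintro (hs | ht)
              · exact hxm hs.symm
              · exact hxn ht.symm
            rw [mem_NminI] at hx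
            have hx' : x ∈ NminI (a :: rest) := by
              rw [mem_NminI]
              rw [← firstNodeOp_cons_neg rest hmen] at hx
              exact hx
            exact Finset.mem_erase.2 ⟨hxn, Finset.mem_coe.1 (hNmin hx')⟩
        · intro x hx
          rintro ⟨m', l', h⟩
          obtain ⟨hxn, hxN⟩ := Finset.mem_erase.1 (Finset.mem_coe.1 hx)
          by_cases hxm : x = m
          · have hx0 : x ∈ (↑T₀₁.N : Set Node) := by
              rw [hX0]
              show x ∈ (↑(T₀.N.erase n) : Set Node)
              rw [hxm]
              exact Finset.mem_coe.2 (Finset.mem_erase.2 ⟨hmn0, hm0⟩)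
            exact (rNmax hx0) ⟨m', l', h⟩
          · have hmen : ¬ mentionsN a.1 x := by
              rw [hop]
              rintro (hs | ht)
              · exact hxm hs.symm
              · exact hxn ht.symm
            exact (hNmax (Finset.mem_coe.2 hxN))
              ⟨m', l', by rw [firstNodeOp_cons_neg rest hmen]; exact h⟩
        · intro e he
          refine Finset.mem_coe.2 ?_
          show e ∈ T.E.erase (m, l, n)
          by_cases heq : e = (m, l, n)
          · exfalso
            have hmem : e ∈ T₀₁.E := Finset.mem_coe.1 (rEmin he)
            rw [hX0] at hmem
            replace hmem : e ∈ T₀.E.erase (m, l, n) := hmem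
            exact (Finset.mem_erase.1 hmem).1 heq
          · have hne : a.1.edge ≠ e := by
              rw [hop]
              exact fun h => heq (by rw [← h]; rfl)
            have he' : e ∈ EminI (a :: rest) := mem_EminI.2
              (by rw [firstEdgeOp_cons_neg rest hne]; exact mem_EminI.1 he)
            exact Finset.mem_erase.2 ⟨heq, Finset.mem_coe.1 (hEmin he')⟩
        · intro e he
          obtain ⟨hne, heE⟩ := Finset.mem_erase.1 (Finset.mem_coe.1 he)
          rcases mem_EmaxI.1 (hEmax (Finset.mem_coe.2 heE)) with hmin | ⟨h1, h2⟩
          · refine Or.inl (mem_EminI.2 ?_)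
            rw [mem_EminI] at hmin
            have hne2 : a.1.edge ≠ e := by
              rw [hop]
              exact fun h => hne (by rw [← h]; rfl)
            rw [firstEdgeOp_cons_neg rest hne2] at hmin
            exact hmin
          · exact Or.inr ⟨fun h => h1 (occursTgt_cons.2 (Or.inr h)),
              fun h => h2 (occursTgt_cons.2 (Or.inr h))⟩
      exact applyQL_cons_isSome.2 ⟨_, hstep, ih T₀₁ _ hT₀₁ hrest0 hT₁' hinrest⟩

end Aux7e


section Aux7f

lemma src_first_in_tree (S : QLSchedule) :
    ∀ {x : Node} {o : Op}, firstNodeOp S x = some o → o.src = x →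
      ∀ T, IsDT T → (applyQL S T).isSome → x ∈ T.N := by
  induction S with
  | nil => intro x o h; rw [firstNodeOp_nil] at h; cases h
  | cons a rest ih =>
    intro x o hfirst hsrc T hT hdef
    obtain ⟨T₁, ha, hrest⟩ := applyQL_cons_isSome.mp hdef
    by_cases hm : mentionsN a.1 x
    · rw [firstNodeOp_cons_pos rest hm] at hfirst
      cases hfirst
      cases hop : a.1 with
      | add m l n =>
        rw [hop] at ha hsrc
        obtain ⟨-, hmN, -, -⟩ := add_facts hT ha
        exact (show m = x from hsrc) ▸ hmN
      | del m l n =>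
        rw [hop] at ha hsrc
        obtain ⟨-, -, -, -, hmN, -, -⟩ := del_facts hT ha
        exact (show m = x from hsrc) ▸ hmN
    · rw [firstNodeOp_cons_neg rest hm] at hfirst
      have hx₁ : x ∈ T₁.N := ih hfirst hsrc T₁ (applyOp_isDT ha) hrest
      cases hop : a.1 with
      | add m l n =>
        rw [hop] at ha
        obtain ⟨hX, -, -, -⟩ := add_facts hT ha
        rw [hX] at hx₁
        replace hx₁ : x ∈ insert n T.N := hx₁
        rw [Finset.mem_insert] at hx₁
        rcases hx₁ with rfl | hx₁
        · exact absurd (Or.inr (by rw [hop]; rfl)) hm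
        · exact hx₁
      | del m l n =>
        rw [hop] at ha
        obtain ⟨hX, -⟩ := del_facts hT ha
        rw [hX] at hx₁
        exact Finset.mem_of_mem_erase hx₁

lemma occursTgt_ne_root (S : QLSchedule) :
    ∀ {x : Node}, occursTgt S x → ∀ T, IsDT T → (applyQL S T).isSome → x ≠ T.root := by
  induction S with
  | nil => intro x h; exact absurd h occursTgt_nil
  | cons a rest ih =>
    intro x h T hT hdef
    obtain ⟨T₁, ha, hrest⟩ := applyQL_cons_isSome.mp hdef
    rcases occursTgt_cons.1 h with h1 | h1
    · cases hop : a.1 with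
      | add m l n =>
        rw [hop] at ha h1
        obtain ⟨-, -, hnN, -⟩ := add_facts hT ha
        intro hxr
        exact hnN (by rw [show n = x from h1, hxr]; exact hT.1)
      | del m l n =>
        rw [hop] at ha h1
        obtain ⟨-, -, -, hnroot, -⟩ := del_facts hT ha
        intro hxr
        exact hnroot (by rw [show n = x from h1, hxr])
    · have hres := ih h1 T₁ (applyOp_isDT ha) hrest
      rw [applyOp_root ha] at hres
      exact hres

lemma targeted_has_EminI_incoming {S : QLSchedule} {T : Tree3} (hT : IsDT T)
    (hdef : (applyQL S T).isSome) {x : Node} (hmax : x ∈ NmaxI S)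
    (hocc : occursTgt S x) : ∃ m l, (m, l, x) ∈ EminI S := by
  obtain ⟨o, ho⟩ := firstNodeOp_of_occursTgt hocc
  obtain ⟨-, hment⟩ := firstNodeOp_mem ho
  by_cases htx : o.tgt = x
  · cases o with
    | add m' l' n' =>
      exact absurd ⟨m', l', (show n' = x from htx) ▸ ho⟩ hmax
    | del m' l' n' =>
      have hedge := firstEdgeOp_of_firstNodeOp ho
      refine ⟨m', l', ?_⟩
      rw [mem_EminI]
      have hx : n' = x := htx
      rw [← hx]
      exact hedge
  · have hs : o.src = x := hment.resolve_right htx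
    have hxN : x ∈ T.N := src_first_in_tree S ho hs T hT hdef
    have hxr : x ≠ T.root := occursTgt_ne_root S hocc T hT hdef
    obtain ⟨m₂, l₂, he₂⟩ := isdt_incoming hT hxN hxr
    have hio := (B_in S T hT hdef).2.2.2 (Finset.mem_coe.2 he₂)
    rcases mem_EmaxI.1 hio with hmin | ⟨-, h2⟩
    · exact ⟨m₂, l₂, hmin⟩
    · exact absurd hocc h2

lemma B_out {S : QLSchedule} {T T' : Tree3} (hT : IsDT T)
    (hrun : applyQL S T = some T') : OutConds S T' := by
  have hT' := applyQL_isDT hT hrun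
  have hd := applyQL_dual hT hrun
  exact (inConds_dual S T').1 (B_in (dual S) T' hT' (by rw [hd]; rfl))

lemma A_out {S : QLSchedule} {T₀ T' : Tree3} (hT₀ : IsDT T₀)
    (hdef₀ : (applyQL S T₀).isSome) (hT' : IsDT T') (hout : OutConds S T') :
    ∃ T, IsDT T ∧ applyQL S T = some T' := by
  obtain ⟨T₀', hrun₀⟩ := Option.isSome_iff_exists.1 hdef₀
  have hT₀' := applyQL_isDT hT₀ hrun₀
  have hdual₀ : applyQL (dual S) T₀' = some T₀ := applyQL_dual hT₀ hrun₀
  have hdef' : (applyQL (dual S) T').isSome :=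
    A_def (dual S) T₀' T' hT₀' (by rw [hdual₀]; rfl) hT' ((inConds_dual S T').2 hout)
  obtain ⟨T, hTrun⟩ := Option.isSome_iff_exists.1 hdef'
  have hTdt : IsDT T := applyQL_isDT hT' hTrun
  have hback := applyQL_dual hT' hTrun
  rw [dual_dual] at hback
  exact ⟨T, hTdt, hback⟩

lemma targeted_has_EminO_incoming {S : QLSchedule} {T : Tree3} (hT : IsDT T)
    (hdef : (applyQL S T).isSome) {x : Node} (hmax : x ∈ NmaxO S)
    (hocc : occursTgt S x) : ∃ m l, (m, l, x) ∈ EminO S := by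
  obtain ⟨T', hrun⟩ := Option.isSome_iff_exists.1 hdef
  have hT' := applyQL_isDT hT hrun
  have hd := applyQL_dual hT hrun
  have := targeted_has_EminI_incoming hT' (by rw [hd]; rfl)
    (x := x) (by rw [NmaxI_dual]; exact hmax) ((occursTgt_dual S x).2 hocc)
  rw [EminI_dual] at this
  exact this

lemma EminI_tgt_occ {S : QLSchedule} {e : Edge} (h : e ∈ EminI S) :
    occursTgt S e.2.2 := by
  rw [mem_EminI] at h
  obtain ⟨hmem, -⟩ := firstEdgeOp_mem h
  exact ⟨_, hmem, rfl⟩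

lemma EminO_tgt_occ {S : QLSchedule} {e : Edge} (h : e ∈ EminO S) :
    occursTgt S e.2.2 := by
  obtain ⟨hmem, -⟩ := lastEdgeOp_mem (h : lastEdgeOp S e = some (Op.add e.1 e.2.1 e.2.2))
  exact ⟨_, hmem, rfl⟩

lemma mem_EminO {S : QLSchedule} {e : Edge} :
    e ∈ EminO S ↔ lastEdgeOp S e = some (Op.add e.1 e.2.1 e.2.2) := Iff.rfl

lemma mem_NmaxO {S : QLSchedule} {x : Node} :
    x ∈ NmaxO S ↔ ¬ ∃ m l, lastNodeOp S x = some (Op.del m l x) := Iff.rfl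

lemma mem_NmaxO_of_not_occ {S : QLSchedule} {x : Node}
    (h : ¬ occursTgt S x) : x ∈ NmaxO S := by
  rw [mem_NmaxO]
  rintro ⟨m, l, hl⟩
  exact h ⟨_, (lastNodeOp_mem hl).1, rfl⟩

lemma mem_NmaxI_of_not_occ {S : QLSchedule} {x : Node}
    (h : ¬ occursTgt S x) : x ∈ NmaxI S := by
  rw [mem_NmaxI]
  rintro ⟨m, l, hl⟩
  exact h ⟨_, (firstNodeOp_mem hl).1, rfl⟩

end Aux7f


section Aux7g

lemma mem_EmaxO {S : QLSchedule} {e : Edge} :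
    e ∈ EmaxO S ↔ e ∈ EminO S ∨ (¬ occursTgt S e.1 ∧ ¬ occursTgt S e.2.2) := Iff.rfl

lemma exists_mid {S₁ S₂ : QLSchedule} (h₁ : ConsistentQL S₁) (h₂ : ConsistentQL S₂)
    (c₁ : NminI S₂ ⊆ NmaxO S₁) (c₂ : EminI S₂ ⊆ EmaxO S₁)
    (c₃ : NminO S₁ ⊆ NmaxI S₂) (c₄ : EminO S₁ ⊆ EmaxI S₂) :
    ∃ T', IsDT T' ∧ OutConds S₁ T' ∧ InConds S₂ T' := by
  classical
  obtain ⟨Ta, hTa, hdefa⟩ := h₁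
  obtain ⟨Ta', hruna⟩ := Option.isSome_iff_exists.1 hdefa
  have hTa' : IsDT Ta' := applyQL_isDT hTa hruna
  have hOutA : OutConds S₁ Ta' := B_out hTa hruna
  obtain ⟨Tb, hTb, hdefb⟩ := h₂
  have hInB : InConds S₂ Tb := B_in S₂ Tb hTb hdefb
  set Fset : Set Edge := EminO S₁ ∪ EminI S₂ with hFset
  have cross : ∀ e ∈ EminO S₁, occursTgt S₂ e.2.2 → e ∈ EminI S₂ := by
    intro e he hocc
    rcases mem_EmaxI.1 (c₄ he) with h | ⟨-, h2⟩
    · exact h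
    · exact absurd hocc h2
  have cross' : ∀ e ∈ EminI S₂, occursTgt S₁ e.2.2 → e ∈ EminO S₁ := by
    intro e he hocc
    rcases mem_EmaxO.1 (c₂ he) with h | ⟨-, h2⟩
    · exact h
    · exact absurd hocc h2
  have huniqF : ∀ e ∈ Fset, ∀ e' ∈ Fset, e.2.2 = e'.2.2 → e = e' := by
    intro e he e' he' htgt
    have toTb : ∀ f ∈ EminI S₂, f ∈ Tb.E := fun f hf => Finset.mem_coe.1 (hInB.2.2.1 hf)
    have toTa : ∀ f ∈ EminO S₁, f ∈ Ta'.E := fun f hf => Finset.mem_coe.1 (hOutA.2.2.1 hf)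
    rcases he with heO | heI <;> rcases he' with heO' | heI'
    · exact hTa'.2.2.1 e (toTa e heO) e' (toTa e' heO') htgt
    · have h2 : e ∈ EminI S₂ := cross e heO (htgt ▸ EminI_tgt_occ heI')
      exact hTb.2.2.1 e (toTb e h2) e' (toTb e' heI') htgt
    · have h2 : e' ∈ EminI S₂ := cross e' heO' (htgt ▸ EminI_tgt_occ heI)
      exact hTb.2.2.1 e (toTb e heI) e' (toTb e' h2) htgt
    · exact hTb.2.2.1 e (toTb e heI) e' (toTb e' heI') htgt
  have L1 : ∀ {a : Node} {lp : List Label} {b : Node}, SPath Fset a lp b →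
      occursTgt S₂ a → SPath (EminI S₂) a lp b := by
    intro a lp b hp
    induction hp with
    | nil n => intro _; exact SPath.nil n
    | @cons m n n' l lp h1 h2 ih =>
      intro hocc
      have hin : ((m, l, n) : Edge) ∈ EminI S₂ := by
        rcases h1 with hO | hI
        · rcases mem_EmaxI.1 (c₄ hO) with h | ⟨hh1, -⟩
          · exact h
          · exact absurd hocc hh1
        · exact hI
      exact SPath.cons hin (ih (EminI_tgt_occ hin))
  have L1' : ∀ {a : Node} {lp : List Label} {b : Node}, SPath Fset a lp b →
      occursTgt S₁ a → SPath (EminO S₁) a lp b := by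
    intro a lp b hp
    induction hp with
    | nil n => intro _; exact SPath.nil n
    | @cons m n n' l lp h1 h2 ih =>
      intro hocc
      have hin : ((m, l, n) : Edge) ∈ EminO S₁ := by
        rcases h1 with hO | hI
        · exact hO
        · rcases mem_EmaxO.1 (c₂ hI) with h | ⟨hh1, -⟩
          · exact h
          · exact absurd hocc hh1
      exact SPath.cons hin (EminO_tgt_occ hin |> ih)
  have hacyclic : ∀ (n : Node) (lp : List Label), SPath Fset n lp n → lp = [] := by
    intro n lp hp
    by_contra hne
    obtain ⟨lp', l, b, -, -, helast⟩ := spath_last hp hne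
    rcases helast with hO | hI
    · have hocc : occursTgt S₁ n := EminO_tgt_occ hO
      have hpath := L1' hp hocc
      have : SPath (↑Ta'.E) n lp n :=
        spath_mono (fun f hf => Finset.mem_coe.2 (Finset.mem_coe.1 (hOutA.2.2.1 hf))) hpath
      exact hne (isdt_acyclic hTa' this)
    · have hocc : occursTgt S₂ n := EminI_tgt_occ hI
      have hpath := L1 hp hocc
      have : SPath (↑Tb.E) n lp n :=
        spath_mono (fun f hf => Finset.mem_coe.2 (Finset.mem_coe.1 (hInB.2.2.1 hf))) hpath
      exact hne (isdt_acyclic hTb this)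
  -- finite carriers
  set L : List Op := ops S₁ ++ ops S₂ with hL
  set M : Finset Node := (L.map Op.src).toFinset ∪ (L.map Op.tgt).toFinset with hM
  have hMsrc : ∀ o ∈ L, o.src ∈ M := by
    intro o ho
    exact Finset.mem_union_left _ (by rw [List.mem_toFinset]; exact List.mem_map_of_mem (f := Op.src) ho)
  have hMtgt : ∀ o ∈ L, o.tgt ∈ M := by
    intro o ho
    exact Finset.mem_union_right _ (by rw [List.mem_toFinset]; exact List.mem_map_of_mem (f := Op.tgt) ho)
  have hocc₁M : ∀ x, occursTgt S₁ x → x ∈ M := by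
    rintro x ⟨o, ho, rfl⟩
    exact hMtgt o (by rw [hL]; exact List.mem_append_left _ ho)
  have hocc₂M : ∀ x, occursTgt S₂ x → x ∈ M := by
    rintro x ⟨o, ho, rfl⟩
    exact hMtgt o (by rw [hL]; exact List.mem_append_right _ ho)
  set VP : Node → Prop :=
    fun x => x ∈ NminO S₁ ∨ x ∈ NminI S₂ ∨ (∃ e ∈ Fset, e.1 = x ∨ e.2.2 = x) with hVP
  have hVP_M : ∀ x, VP x → x ∈ M := by
    intro x hx
    rcases hx with hx | hx | ⟨e, he, hend⟩
    · rcases hx with (⟨l, n, h⟩ | ⟨l, n, h⟩) | ⟨m, l, h⟩ <;>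
      · obtain ⟨ho, hment⟩ := lastNodeOp_mem h
        rcases hment with hs | ht
        · exact hs ▸ hMsrc _ (List.mem_append_left _ ho)
        · exact ht ▸ hMtgt _ (List.mem_append_left _ ho)
    · rw [mem_NminI] at hx
      rcases hx with ⟨l, n, h⟩ | ⟨l, n, h⟩ | ⟨m, l, h⟩ <;>
      · obtain ⟨ho, hment⟩ := firstNodeOp_mem h
        rcases hment with hs | ht
        · exact hs ▸ hMsrc _ (List.mem_append_right _ ho)
        · exact ht ▸ hMtgt _ (List.mem_append_right _ ho)
    · rcases he with heO | heI
      · obtain ⟨ho, -⟩ := lastEdgeOp_mem (mem_EminO.1 heO)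
        rcases hend with h | h
        · rw [← h]; exact hMsrc _ (List.mem_append_left _ ho)
        · rw [← h]; exact hMtgt _ (List.mem_append_left _ ho)
      · obtain ⟨ho, -⟩ := firstEdgeOp_mem (mem_EminI.1 heI)
        rcases hend with h | h
        · rw [← h]; exact hMsrc _ (List.mem_append_right _ ho)
        · rw [← h]; exact hMtgt _ (List.mem_append_right _ ho)
  set V : Finset Node := M.filter VP with hV
  have mem_V : ∀ x, x ∈ V ↔ VP x := by
    intro x
    rw [hV, Finset.mem_filter]
    exact ⟨fun h => h.2, fun h => ⟨hVP_M x h, h⟩⟩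
  set Fe : Finset Edge := ((L.map Op.edge).toFinset).filter (fun e => e ∈ Fset) with hFe
  have mem_Fe : ∀ e, e ∈ Fe ↔ e ∈ Fset := by
    intro e
    rw [hFe, Finset.mem_filter]
    refine ⟨fun h => h.2, fun h => ⟨?_, h⟩⟩
    rw [List.mem_toFinset]
    rcases h with hO | hI
    · obtain ⟨ho, hedge⟩ := lastEdgeOp_mem (mem_EminO.1 hO)
      exact hedge ▸ List.mem_map_of_mem (f := Op.edge) (by rw [hL]; exact List.mem_append_left _ ho)
    · obtain ⟨ho, hedge⟩ := firstEdgeOp_mem (mem_EminI.1 hI)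
      exact hedge ▸ List.mem_map_of_mem (f := Op.edge) (by rw [hL]; exact List.mem_append_right _ ho)
  set r : Node := M.sup id + 1 with hr
  have hrM : r ∉ M := by
    intro h
    have hle : id r ≤ M.sup id := Finset.le_sup h
    have hle2 : M.sup id + 1 ≤ M.sup id := by rw [← hr]; exact hle
    exact Nat.not_succ_le_self _ hle2
  have hroccS₁ : ¬ occursTgt S₁ r := fun h => hrM (hocc₁M r h)
  have hroccS₂ : ¬ occursTgt S₂ r := fun h => hrM (hocc₂M r h)
  have hFsrcV : ∀ e ∈ Fset, e.1 ∈ V ∧ e.2.2 ∈ V := by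
    intro e he
    exact ⟨(mem_V _).2 (Or.inr (Or.inr ⟨e, he, Or.inl rfl⟩)),
      (mem_V _).2 (Or.inr (Or.inr ⟨e, he, Or.inr rfl⟩))⟩
  have hVM : ∀ x ∈ V, x ∈ M := fun x hx => (Finset.mem_filter.1 hx).1
  have hrV : r ∉ V := fun h => hrM (hVM r h)
  have hVmaxO : ∀ x ∈ V, x ∈ NmaxO S₁ := by
    intro x hx
    rcases (mem_V x).1 hx with hx | hx | ⟨e, he, hend⟩
    · exact hOutA.2.1 (hOutA.1 hx)
    · exact c₁ hx
    · have hO : e ∈ EminO S₁ → x ∈ NmaxO S₁ := by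
        intro hO
        have heT : e ∈ Ta'.E := Finset.mem_coe.1 (hOutA.2.2.1 hO)
        rcases hend with h | h
        · exact hOutA.2.1 (Finset.mem_coe.2 (h ▸ (hTa'.2.1 e heT).1))
        · exact hOutA.2.1 (Finset.mem_coe.2 (h ▸ (hTa'.2.1 e heT).2))
      rcases he with heO | heI
      · exact hO heO
      · rcases mem_EmaxO.1 (c₂ heI) with h | ⟨h1, h2⟩
        · exact hO h
        · rcases hend with h | h
          · exact mem_NmaxO_of_not_occ (h ▸ h1)
          · exact mem_NmaxO_of_not_occ (h ▸ h2)
  have hVmaxI : ∀ x ∈ V, x ∈ NmaxI S₂ := by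
    intro x hx
    rcases (mem_V x).1 hx with hx | hx | ⟨e, he, hend⟩
    · exact c₃ hx
    · exact hInB.2.1 (hInB.1 hx)
    · have hI : e ∈ EminI S₂ → x ∈ NmaxI S₂ := by
        intro hI
        have heT : e ∈ Tb.E := Finset.mem_coe.1 (hInB.2.2.1 hI)
        rcases hend with h | h
        · exact hInB.2.1 (Finset.mem_coe.2 (h ▸ (hTb.2.1 e heT).1))
        · exact hInB.2.1 (Finset.mem_coe.2 (h ▸ (hTb.2.1 e heT).2))
      rcases he with heO | heI
      · rcases mem_EmaxI.1 (c₄ heO) with h | ⟨h1, h2⟩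
        · exact hI h
        · rcases hend with h | h
          · exact mem_NmaxI_of_not_occ (h ▸ h1)
          · exact mem_NmaxI_of_not_occ (h ▸ h2)
      · exact hI heI
  set noInc : Node → Prop := fun x => ¬ ∃ p l, ((p, l, x) : Edge) ∈ Fset with hnoInc
  have hnocc : ∀ x ∈ V, noInc x → ¬ occursTgt S₁ x ∧ ¬ occursTgt S₂ x := by
    intro x hxV hni
    constructor
    · intro hocc
      obtain ⟨p, l, hpl⟩ := targeted_has_EminO_incoming hTa hdefa (hVmaxO x hxV) hocc
      exact hni ⟨p, l, Or.inl hpl⟩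
    · intro hocc
      obtain ⟨p, l, hpl⟩ := targeted_has_EminI_incoming hTb hdefb (hVmaxI x hxV) hocc
      exact hni ⟨p, l, Or.inr hpl⟩
  set E' : Finset Edge :=
    Fe ∪ (V.filter noInc).image (fun x => ((r, 0, x) : Edge)) with hE'
  have mem_E' : ∀ e, e ∈ E' ↔ e ∈ Fset ∨ ∃ x ∈ V, noInc x ∧ e = (r, 0, x) := by
    intro e
    rw [hE', Finset.mem_union, mem_Fe, Finset.mem_image]
    constructor
    · rintro (h | ⟨x, hx, rfl⟩)
      · exact Or.inl h
      · obtain ⟨hxV, hxn⟩ := Finset.mem_filter.1 hx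
        exact Or.inr ⟨x, hxV, hxn, rfl⟩
    · rintro (h | ⟨x, hxV, hxn, rfl⟩)
      · exact Or.inl h
      · exact Or.inr ⟨x, Finset.mem_filter.2 ⟨hxV, hxn⟩, rfl⟩
  -- the tree
  refine ⟨⟨insert r V, E', r⟩, ?_, ?_, ?_⟩
  · -- IsDT
    refine ⟨Finset.mem_insert_self _ _, ?_, ?_, ?_, ?_⟩
    · intro e he
      rcases (mem_E' e).1 he with h | ⟨x, hxV, -, rfl⟩
      · exact ⟨Finset.mem_insert_of_mem (hFsrcV e h).1,
          Finset.mem_insert_of_mem (hFsrcV e h).2⟩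
      · exact ⟨Finset.mem_insert_self _ _, Finset.mem_insert_of_mem hxV⟩
    · intro e he e' he' htgt
      rcases (mem_E' e).1 he with h | ⟨x, hxV, hxn, rfl⟩ <;>
        rcases (mem_E' e').1 he' with h' | ⟨x', hxV', hxn', rfl⟩
      · exact huniqF e h e' h' htgt
      · exfalso
        apply hxn'
        refine ⟨e.1, e.2.1, ?_⟩
        have : e.2.2 = x' := htgt
        rw [← this, edge_eta]
        exact h
      · exfalso
        apply hxn
        refine ⟨e'.1, e'.2.1, ?_⟩
        have : e'.2.2 = x := htgt.symm
        rw [← this, edge_eta]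
        exact h'
      · have : x = x' := htgt
        rw [this]
    · intro e he
      rcases (mem_E' e).1 he with h | ⟨x, hxV, -, rfl⟩
      · exact fun hc => hrM ((show e.2.2 = r from hc) ▸ hVM _ (hFsrcV e h).2)
      · exact fun hc => hrV ((show x = r from hc) ▸ hxV)
    · intro x hx
      show Relation.ReflTransGen (estep ↑E') r x
      rw [Finset.mem_insert] at hx
      rcases hx with rfl | hx
      · exact Relation.ReflTransGen.refl
      · set anc : Node → Finset Node :=
          fun x => V.filter (fun y => ∃ lp, lp ≠ [] ∧ SPath Fset y lp x) with hanc
        have key : ∀ k, ∀ x ∈ V, (anc x).card ≤ k →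
            Relation.ReflTransGen (estep ↑E') r x := by
          intro k
          induction k with
          | zero =>
            intro x hxV hcard
            by_cases hni : noInc x
            · exact Relation.ReflTransGen.single
                ⟨0, Finset.mem_coe.2 ((mem_E' _).2 (Or.inr ⟨x, hxV, hni, rfl⟩))⟩
            · exfalso
              obtain ⟨p, l, hpl⟩ := not_not.1 hni
              have hpanc : p ∈ anc x := Finset.mem_filter.2
                ⟨(hFsrcV _ hpl).1, [l], by simp, SPath.cons hpl (SPath.nil x)⟩
              have := Finset.card_pos.2 ⟨p, hpanc⟩
              omega
          | succ k ihk =>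
            intro x hxV hcard
            by_cases hni : noInc x
            · exact Relation.ReflTransGen.single
                ⟨0, Finset.mem_coe.2 ((mem_E' _).2 (Or.inr ⟨x, hxV, hni, rfl⟩))⟩
            · obtain ⟨p, l, hpl⟩ := not_not.1 hni
              have hpV : p ∈ V := (hFsrcV _ hpl).1
              have hsub : anc p ⊆ anc x := by
                intro y hy
                obtain ⟨hyV, lp, hne, hpath⟩ := Finset.mem_filter.1 hy
                exact Finset.mem_filter.2 ⟨hyV, lp ++ [l], by simp, spath_snoc hpath hpl⟩
              have hpx : p ∈ anc x := Finset.mem_filter.2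
                ⟨hpV, [l], by simp, SPath.cons hpl (SPath.nil x)⟩
              have hpp : p ∉ anc p := by
                intro hc
                obtain ⟨-, lp, hne, hpath⟩ := Finset.mem_filter.1 hc
                exact hne (hacyclic p lp hpath)
              have hlt : (anc p).card < (anc x).card :=
                Finset.card_lt_card ((Finset.ssubset_iff_of_subset hsub).2 ⟨p, hpx, hpp⟩)
              exact (ihk p hpV (by omega)).tail
                ⟨l, Finset.mem_coe.2 ((mem_E' _).2 (Or.inl hpl))⟩
        exact key (anc x).card x hx le_rfl
  · -- OutConds S₁
    refine ⟨?_, ?_, ?_, ?_⟩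
    · intro x hx
      exact Finset.mem_coe.2 (Finset.mem_insert_of_mem ((mem_V x).2 (Or.inl hx)))
    · intro x hx
      replace hx : x ∈ insert r V := Finset.mem_coe.1 hx
      rw [Finset.mem_insert] at hx
      rcases hx with rfl | hx
      · exact mem_NmaxO_of_not_occ hroccS₁
      · exact hVmaxO x hx
    · intro e he
      exact Finset.mem_coe.2 ((mem_E' e).2 (Or.inl (Or.inl he)))
    · intro e he
      rcases (mem_E' e).1 (Finset.mem_coe.1 he) with h | ⟨x, hxV, hxn, rfl⟩
      · rcases h with hO | hI
        · exact Or.inl hO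
        · exact c₂ hI
      · exact Or.inr ⟨hroccS₁, (hnocc x hxV hxn).1⟩
  · -- InConds S₂
    refine ⟨?_, ?_, ?_, ?_⟩
    · intro x hx
      exact Finset.mem_coe.2 (Finset.mem_insert_of_mem ((mem_V x).2 (Or.inr (Or.inl hx))))
    · intro x hx
      replace hx : x ∈ insert r V := Finset.mem_coe.1 hx
      rw [Finset.mem_insert] at hx
      rcases hx with rfl | hx
      · exact mem_NmaxI_of_not_occ hroccS₂
      · exact hVmaxI x hx
    · intro e he
      exact Finset.mem_coe.2 ((mem_E' e).2 (Or.inl (Or.inr he)))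
    · intro e he
      rcases (mem_E' e).1 (Finset.mem_coe.1 he) with h | ⟨x, hxV, hxn, rfl⟩
      · rcases h with hO | hI
        · exact c₄ hO
        · exact Or.inl hI
      · exact Or.inr ⟨hroccS₂, (hnocc x hxV hxn).2⟩

end Aux7g

/-- The concatenation of two consistent QL schedules is consistent iff
the output sets of the first fit the input sets of the second. -/
theorem concat_consistent_iff (S₁ S₂ : QLSchedule)
    (h₁ : ConsistentQL S₁) (h₂ : ConsistentQL S₂) :
    ConsistentQL (S₁ ++ S₂) ↔
      (NminI S₂ ⊆ NmaxO S₁ ∧ EminI S₂ ⊆ EmaxO S₁ ∧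
       NminO S₁ ⊆ NmaxI S₂ ∧ EminO S₁ ⊆ EmaxI S₂) := by
  constructor
  · rintro ⟨T, hT, hdef⟩
    rw [applyQL_append] at hdef
    cases hrun : applyQL S₁ T with
    | none => rw [hrun] at hdef; simp at hdef
    | some T' =>
      rw [hrun] at hdef
      have hdef2 : (applyQL S₂ T').isSome := hdef
      have hT' : IsDT T' := applyQL_isDT hT hrun
      obtain ⟨oN1, oN2, oE1, oE2⟩ := B_out hT hrun
      obtain ⟨iN1, iN2, iE1, iE2⟩ := B_in S₂ T' hT' hdef2
      exact ⟨fun x hx => oN2 (iN1 hx), fun e he => oE2 (iE1 he),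
        fun x hx => iN2 (oN1 hx), fun e he => iE2 (oE1 he)⟩
  · rintro ⟨hc₁, hc₂, hc₃, hc₄⟩
    obtain ⟨T', hT', hout, hin⟩ := exists_mid h₁ h₂ hc₁ hc₂ hc₃ hc₄
    obtain ⟨Ta, hTa, hdefa⟩ := h₁
    obtain ⟨T, hT, hrun⟩ := A_out hTa hdefa hT' hout
    obtain ⟨Tb, hTb, hdefb⟩ := h₂
    have hdef2 : (applyQL S₂ T').isSome := A_def S₂ Tb T' hTb hdefb hT' hin
    refine ⟨T, hT, ?_⟩
    rw [applyQL_append, hrun]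
    exact hdef2
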